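/- arXiv:1809.05895 — 12 statements merged into one kernel-verified Lean document; each statement's English description precedes it below -/
import Mathlib

section
/- Let f: ℝ^n → ℝ be L-smooth (not necessarily convex). Suppose sequences (x^k), (v^k), (y^k) in ℝ^n and nonnegative reals (a_k), (A_k) and functions ψ_k satisfy: A_0 = 0, x^0 = v^0, ψ_0(x) = (1/2)‖x − x^0‖₂²; for each k ≥ 0: β_k minimizes β ↦ f(v^k + β(x^k − v^k)) over [0,1] and y^k = v^k + β_k(x^k − v^k); x^{k+1} = y^k − (1/L)∇f(y^k); a_{k+1} > 0 solves a_{k+1}²/(A_k + a_{k+1}) = 1/L; A_{k+1} = A_k + a_{k+1}; ψ_{k+1}(x) = ψ_k(x) + a_{k+1}(f(y^k) + ⟨∇f(y^k), x − y^k⟩); and v^{k+1} is the minimizer of ψ_{k+1} over ℝ^n. Then for every k ≥ 0: A_k · f(x^k) ≤ min_{x ∈ ℝ^n} ψ_k(x) = ψ_k(v^k), and A_k ≥ k²/(4L). -/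
/-!
The estimate-sequence argument. Inductively `ψ k z = ψ k (v k) + ½‖z - v k‖²`, so adding the affine
minorant `a (f y + ⟪∇f y, z - y⟫)` moves the minimizer to `v k - a ∇f y` and changes the minimum by
`a ⟪∇f y, v k - y⟫ - a²‖∇f y‖² / 2`. Convexity of `f` is replaced by the exact line search: since
`y k` minimizes `f` on the segment `[v k, x k]`, we get `f (y k) ≤ f (x k)` and
`⟪∇f (y k), v k - y k⟫ ≥ 0`. With the descent lemma `f (x (k+1)) ≤ f (y k) - ‖∇f (y k)‖² / (2L)`
and `L a² = A (k+1)`, this propagates `A k f (x k) ≤ ψ k (v k)`.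

For the growth of `A`, `u = 2 L a (k+1)` satisfies `u² = 4 L A (k+1)` and `u² - 2u = 4 L A k`,
so `4 L A k ≥ k²` forces `u ≥ k + 1`.
-/

open scoped RealInnerProductSpace

theorem eq_of_forall_le_of_eq_add_half_norm_sub_sq {E : Type*} [NormedAddCommGroup E]
    {φ : E → ℝ} {c : ℝ} {m p : E}
    (hφ : ∀ z, φ z = c + 1 / 2 * ‖z - m‖ ^ 2) (hp : ∀ z, φ p ≤ φ z) : p = m := by
  have := hp m
  rw [hφ, hφ, sub_self, norm_zero] at this
  rw [← sub_eq_zero, ← norm_eq_zero]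
  nlinarith [norm_nonneg (p - m)]

theorem isMinOn_segment_of_forall_le {E : Type*} [AddCommGroup E] [Module ℝ E] {f : E → ℝ}
    {β : ℝ} {v x : E} (hβ : β ∈ Set.Icc (0 : ℝ) 1)
    (hmin : ∀ b ∈ Set.Icc (0 : ℝ) 1, f (v + β • (x - v)) ≤ f (v + b • (x - v))) :
    v + β • (x - v) ∈ segment ℝ v x ∧ IsMinOn f (segment ℝ v x) (v + β • (x - v)) := by
  rw [segment_eq_image']
  exact ⟨⟨β, hβ, rfl⟩, fun _ ⟨b, hb, hz⟩ => hz ▸ hmin b hb⟩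

section Quadratic

variable {E : Type*} [NormedAddCommGroup E] [InnerProductSpace ℝ E]

theorem half_norm_sub_sq_add_smul_inner (z m g : E) (a : ℝ) :
    1 / 2 * ‖z - m‖ ^ 2 + a * ⟪g, z - m⟫ =
      1 / 2 * ‖z - (m - a • g)‖ ^ 2 - a ^ 2 / 2 * ‖g‖ ^ 2 := by
  rw [sub_sub_eq_add_sub, add_sub_right_comm, norm_add_sq_real, norm_smul, mul_pow,
    Real.norm_eq_abs, sq_abs, real_inner_smul_right, real_inner_comm]
  ring

theorem add_affine_minimizer_of_eq_add_half_norm_sub_sq {ψ ψ' : E → ℝ} {v v' g y : E} {a b : ℝ}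
    (hψ : ∀ z, ψ z = ψ v + 1 / 2 * ‖z - v‖ ^ 2)
    (hψ' : ∀ z, ψ' z = ψ z + a * (b + ⟪g, z - y⟫))
    (hv' : ∀ z, ψ' v' ≤ ψ' z) :
    ψ' v' = ψ v + a * (b + ⟪g, v - y⟫) - a ^ 2 / 2 * ‖g‖ ^ 2 ∧
      ∀ z, ψ' z = ψ' v' + 1 / 2 * ‖z - v'‖ ^ 2 := by
  have hform : ∀ z, ψ' z = (ψ v + a * (b + ⟪g, v - y⟫) - a ^ 2 / 2 * ‖g‖ ^ 2) +
      1 / 2 * ‖z - (v - a • g)‖ ^ 2 := fun z => by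
    have hz : z - y = (z - v) + (v - y) := by abel
    rw [hψ', hψ, hz, inner_add_right]
    linear_combination half_norm_sub_sq_add_smul_inner z v g a
  obtain rfl := eq_of_forall_le_of_eq_add_half_norm_sub_sq hform hv'
  have hval : ψ' (v - a • g) = ψ v + a * (b + ⟪g, v - y⟫) - a ^ 2 / 2 * ‖g‖ ^ 2 := by
    simpa using hform (v - a • g)
  exact ⟨hval, hval ▸ hform⟩

end Quadratic

section Smooth

variable {E : Type*} [NormedAddCommGroup E] [InnerProductSpace ℝ E] [CompleteSpace E]

theorem HasGradientAt.hasDerivAt_comp_add_smul {f : E → ℝ} {g' p d : E} {t : ℝ}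
    (hf : HasGradientAt f g' (p + t • d)) :
    HasDerivAt (fun s : ℝ => f (p + s • d)) ⟪g', d⟫ t := by
  have hline : HasDerivAt (fun s : ℝ => p + s • d) d t := by
    simpa using ((hasDerivAt_id t).smul_const d).const_add p
  have h := hf.hasFDerivAt.comp_hasDerivAt t hline
  rwa [InnerProductSpace.toDual_apply_apply] at h

theorem IsMinOn.inner_gradient_sub_nonneg {f : E → ℝ} {s : Set E} {g' y z : E}
    (hmin : IsMinOn f s y) (hs : Convex ℝ s) (hy : y ∈ s) (hz : z ∈ s)
    (hf : HasGradientAt f g' y) : 0 ≤ ⟪g', z - y⟫ := by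
  simpa using hmin.localize.hasFDerivWithinAt_nonneg hf.hasFDerivAt.hasFDerivWithinAt
    (sub_mem_posTangentConeAt_of_segment_subset (hs.segment_subset hy hz))

variable {f : E → ℝ} {g : E → E} {L : ℝ}

theorem le_add_inner_add_of_lipschitz_gradient (hf : ∀ z, HasGradientAt f (g z) z)
    (hg : ∀ z w, ‖g z - g w‖ ≤ L * ‖z - w‖) (z w : E) :
    f w ≤ f z + ⟪g z, w - z⟫ + L / 2 * ‖w - z‖ ^ 2 := by
  set d := w - z
  set φ : ℝ → ℝ := fun t => f (z + t • d) - t * ⟪g z, d⟫ - L / 2 * ‖d‖ ^ 2 * t ^ 2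
  have hφ : ∀ t, HasDerivAt φ (⟪g (z + t • d) - g z, d⟫ - L * t * ‖d‖ ^ 2) t := fun t => by
    have := (((hf (z + t • d)).hasDerivAt_comp_add_smul).sub
      ((hasDerivAt_id t).mul_const ⟪g z, d⟫)).sub ((hasDerivAt_pow 2 t).const_mul (L / 2 * ‖d‖ ^ 2))
    refine this.congr_deriv ?_
    rw [inner_sub_left]
    ring
  have hanti : AntitoneOn φ (Set.Icc 0 1) := by
    refine antitoneOn_of_hasDerivWithinAt_nonpos (convex_Icc 0 1)
      (fun t _ => (hφ t).continuousAt.continuousWithinAt) (fun t _ => (hφ t).hasDerivWithinAt)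
      fun t ht => ?_
    rw [interior_Icc] at ht
    have hgt : ‖g (z + t • d) - g z‖ ≤ L * (t * ‖d‖) := by
      simpa [norm_smul, abs_of_pos ht.1] using hg (z + t • d) z
    have := real_inner_le_norm (g (z + t • d) - g z) d
    nlinarith [norm_nonneg d]
  have h01 := hanti (Set.left_mem_Icc.2 zero_le_one) (Set.right_mem_Icc.2 zero_le_one) zero_le_one
  simp only [φ, d, zero_smul, add_zero, one_smul, add_sub_cancel] at h01
  linarith

theorem le_sub_of_gradient_step (hL : 0 < L) (hf : ∀ z, HasGradientAt f (g z) z)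
    (hg : ∀ z w, ‖g z - g w‖ ≤ L * ‖z - w‖) (y : E) :
    f (y - (1 / L) • g y) ≤ f y - ‖g y‖ ^ 2 / (2 * L) := by
  have h := le_add_inner_add_of_lipschitz_gradient hf hg y (y - (1 / L) • g y)
  rw [sub_sub_cancel_left, inner_neg_right, real_inner_smul_right, real_inner_self_eq_norm_sq,
    norm_neg, norm_smul, Real.norm_of_nonneg (by positivity)] at h
  convert h using 1
  field_simp
  ring

theorem estimate_invariant_succ (hL : 0 < L) (hf : ∀ z, HasGradientAt f (g z) z)
    (hg : ∀ z w, ‖g z - g w‖ ≤ L * ‖z - w‖) {ψ ψ' : E → ℝ} {x v y v' : E} {A a : ℝ}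
    (hA : 0 ≤ A) (ha : 0 ≤ a) (haA : L * a ^ 2 = A + a)
    (hfy : f y ≤ f x) (hgy : 0 ≤ ⟪g y, v - y⟫)
    (hψ : ∀ z, ψ z = ψ v + 1 / 2 * ‖z - v‖ ^ 2) (hAψ : A * f x ≤ ψ v)
    (hψ' : ∀ z, ψ' z = ψ z + a * (f y + ⟪g y, z - y⟫)) (hv' : ∀ z, ψ' v' ≤ ψ' z) :
    (∀ z, ψ' z = ψ' v' + 1 / 2 * ‖z - v'‖ ^ 2) ∧ (A + a) * f (y - (1 / L) • g y) ≤ ψ' v' := by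
  obtain ⟨hval, hquad⟩ := add_affine_minimizer_of_eq_add_half_norm_sub_sq hψ hψ' hv'
  refine ⟨hquad, ?_⟩
  have hgrad : (A + a) * (‖g y‖ ^ 2 / (2 * L)) = a ^ 2 / 2 * ‖g y‖ ^ 2 := by
    rw [← haA]
    field_simp
  calc (A + a) * f (y - (1 / L) • g y)
      ≤ (A + a) * (f y - ‖g y‖ ^ 2 / (2 * L)) :=
        mul_le_mul_of_nonneg_left (le_sub_of_gradient_step hL hf hg y) (by positivity)
    _ = A * f y + a * f y - a ^ 2 / 2 * ‖g y‖ ^ 2 := by linear_combination -hgrad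
    _ ≤ ψ' v' := by
        rw [hval]
        nlinarith [mul_le_mul_of_nonneg_left hfy hA, mul_nonneg ha hgy]

end Smooth

theorem mul_eq_of_div_eq_one_div {L s t : ℝ} (hL : 0 < L) (h : s / t = 1 / L) : L * s = t := by
  have ht : t ≠ 0 := fun ht => (one_div_pos.2 hL).ne (by rw [← h, ht, div_zero])
  rw [div_eq_div_iff ht hL.ne'] at h
  linarith

theorem sq_le_four_mul_of_mul_sq_eq {L : ℝ} {A a : ℕ → ℝ} (hL : 0 < L) (hA0 : A 0 = 0)
    (hA : ∀ k, A (k + 1) = A k + a (k + 1)) (ha0 : ∀ k, 0 < a (k + 1))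
    (ha : ∀ k, L * a (k + 1) ^ 2 = A (k + 1)) (k : ℕ) :
    (k : ℝ) ^ 2 ≤ 4 * L * A k := by
  induction k with
  | zero => simp [hA0]
  | succ k ih =>
    set u := 2 * L * a (k + 1)
    have hu : 0 < u := by have := ha0 k; positivity
    have hnext : 4 * L * A (k + 1) = u ^ 2 := by rw [← ha]; ring
    have hprev : 4 * L * A k = u ^ 2 - 2 * u := by rw [← sub_eq_of_eq_add (hA k), ← ha]; ring
    have hk0 : (0 : ℝ) ≤ k := k.cast_nonneg
    have hu2 : 2 ≤ u := by nlinarith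
    have hk : (k : ℝ) + 1 ≤ u := by nlinarith
    push_cast
    nlinarith

/-- Convergence guarantee of the AGMsDR method (Theorem 1 of the paper,
option a): for an `L`-smooth (not necessarily convex) function `f`, the iterates satisfy
`A k * f (x k) ≤ min ψ k = ψ k (v k)` and `A k ≥ k² / (4 L)`. -/
theorem stmt_0 (n : ℕ) (L : ℝ) (hL : 0 < L)
    (f : EuclideanSpace ℝ (Fin n) → ℝ)
    (g : EuclideanSpace ℝ (Fin n) → EuclideanSpace ℝ (Fin n))
    (hdiff : ∀ z, HasGradientAt f (g z) z)
    (hlip : ∀ z w, ‖g z - g w‖ ≤ L * ‖z - w‖)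
    (x v y : ℕ → EuclideanSpace ℝ (Fin n)) (β a A : ℕ → ℝ)
    (ψ : ℕ → EuclideanSpace ℝ (Fin n) → ℝ)
    (hA0 : A 0 = 0) (hx0 : x 0 = v 0)
    (hψ0 : ∀ z, ψ 0 z = (1 / 2) * ‖z - x 0‖ ^ 2)
    (hβmem : ∀ k, β k ∈ Set.Icc (0 : ℝ) 1)
    (hβmin : ∀ k, ∀ b ∈ Set.Icc (0 : ℝ) 1,
      f (v k + β k • (x k - v k)) ≤ f (v k + b • (x k - v k)))
    (hy : ∀ k, y k = v k + β k • (x k - v k))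
    (hxk : ∀ k, x (k + 1) = y k - (1 / L) • g (y k))
    (hapos : ∀ k, 0 < a (k + 1))
    (ha : ∀ k, (a (k + 1)) ^ 2 / (A k + a (k + 1)) = 1 / L)
    (hAk : ∀ k, A (k + 1) = A k + a (k + 1))
    (hψk : ∀ k z, ψ (k + 1) z = ψ k z + a (k + 1) * (f (y k) + ⟪g (y k), z - y k⟫))
    (hv : ∀ k z, ψ (k + 1) (v (k + 1)) ≤ ψ (k + 1) z) :
    ∀ k, (A k * f (x k) ≤ ψ k (v k)) ∧ (∀ z, ψ k (v k) ≤ ψ k z) ∧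
      (k : ℝ) ^ 2 / (4 * L) ≤ A k := by
  have haL : ∀ k, L * a (k + 1) ^ 2 = A (k + 1) := fun k =>
    hAk k ▸ mul_eq_of_div_eq_one_div hL (ha k)
  have hgrowth : ∀ k : ℕ, (k : ℝ) ^ 2 / (4 * L) ≤ A k := fun k => by
    rw [div_le_iff₀ (by positivity), mul_comm]
    exact sq_le_four_mul_of_mul_sq_eq hL hA0 hAk hapos haL k
  have hA : ∀ k, 0 ≤ A k := fun k => le_trans (by positivity) (hgrowth k)
  have main : ∀ k, (∀ z, ψ k z = ψ k (v k) + 1 / 2 * ‖z - v k‖ ^ 2) ∧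
      A k * f (x k) ≤ ψ k (v k) := by
    intro k
    induction k with
    | zero =>
      have hψv : ψ 0 (v 0) = 0 := by simp [hψ0, hx0]
      exact ⟨fun z => by rw [hψ0, hψv, hx0, zero_add], by rw [hA0, hψv, zero_mul]⟩
    | succ k ih =>
      obtain ⟨hymem, hymin⟩ := hy k ▸ isMinOn_segment_of_forall_le (hβmem k) (hβmin k)
      have hfy : f (y k) ≤ f (x k) := hymin (right_mem_segment ℝ _ _)
      have hgy : 0 ≤ ⟪g (y k), v k - y k⟫ := hymin.inner_gradient_sub_nonneg
        (convex_segment _ _) hymem (left_mem_segment ℝ _ _) (hdiff _)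
      rw [hAk, hxk]
      exact estimate_invariant_succ hL hdiff hlip (hA k) (hapos k).le (hAk k ▸ haL k) hfy hgy
        ih.1 ih.2 (hψk k) (hv k)
  intro k
  obtain ⟨hquad, hbound⟩ := main k
  exact ⟨hbound, fun z => by rw [hquad z]; exact le_add_of_nonneg_right (by positivity), hgrowth k⟩
end

section
/- Let L > 0 and let (a_k)_{k≥1} be positive reals and (A_k)_{k≥0} be defined by A_0 = 0 and A_{k+1} = A_k + a_{k+1}. If a_{k+1}²/(A_k + a_{k+1}) ≥ 1/L for all k ≥ 0, then a_k ≥ k/(2L) and A_k ≥ (k+1)²/(4L) ≥ k²/(4L) for all k ≥ 1. -/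
/-!
Since `A (k+1) ≤ L a (k+1)²`, the term `a (k+1)` lies above the positive root of
`L t² - t - A k`, i.e. `2 L a (k+1) ≥ 1 + √(1 + 4 L A k)`. The invariant `4 L A k ≥ (k+1)² - 1`
(true at `k = 0`) therefore gives `2 L a (k+1) ≥ k + 2`, and adding this to `A k` restores the
invariant with slack: `4 L A (k+1) ≥ (k+2)²`.
-/

lemma add_one_le_of_add_le_mul_sq {L x a m : ℝ} (hx : 0 ≤ x) (ha : 0 < a)
    (hxa : x + a ≤ L * a ^ 2) (hm : m ^ 2 ≤ 1 + 4 * L * x) : m + 1 ≤ 2 * L * a := by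
  have hLa : 1 ≤ L * a := le_of_mul_le_mul_right (by nlinarith) ha
  have hsq : m ^ 2 ≤ (2 * L * a - 1) ^ 2 := by nlinarith
  linarith [le_of_sq_le_sq hsq (by linarith)]

section Growth

variable {L : ℝ} {a A : ℕ → ℝ}

lemma partialSum_nonneg (hapos : ∀ k, 0 < a (k + 1)) (hA0 : A 0 = 0)
    (hAk : ∀ k, A (k + 1) = A k + a (k + 1)) (k : ℕ) : 0 ≤ A k := by
  induction k with
  | zero => exact hA0.ge
  | succ n ih => rw [hAk]; linarith [hapos n]

lemma partialSum_le_mul_sq (hL : 0 < L) (hapos : ∀ k, 0 < a (k + 1)) (hA0 : A 0 = 0)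
    (hAk : ∀ k, A (k + 1) = A k + a (k + 1))
    (ha : ∀ k, a (k + 1) ^ 2 / (A k + a (k + 1)) ≥ 1 / L) (k : ℕ) :
    A k + a (k + 1) ≤ L * a (k + 1) ^ 2 := by
  have hS : 0 < A k + a (k + 1) := by
    linarith [hapos k, partialSum_nonneg hapos hA0 hAk k]
  have h := ha k
  rw [ge_iff_le, div_le_div_iff₀ hL hS] at h
  linarith

lemma sq_add_two_mul_le_partialSum (hL : 0 < L) (hapos : ∀ k, 0 < a (k + 1)) (hA0 : A 0 = 0)
    (hAk : ∀ k, A (k + 1) = A k + a (k + 1))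
    (ha : ∀ k, a (k + 1) ^ 2 / (A k + a (k + 1)) ≥ 1 / L) (k : ℕ) :
    (k : ℝ) ^ 2 + 2 * k ≤ 4 * L * A k := by
  induction k with
  | zero => simp [hA0]
  | succ n ih =>
    have hstep : (n : ℝ) + 1 + 1 ≤ 2 * L * a (n + 1) :=
      add_one_le_of_add_le_mul_sq (partialSum_nonneg hapos hA0 hAk n) (hapos n)
        (partialSum_le_mul_sq hL hapos hA0 hAk ha n) (by linarith)
    rw [hAk]
    push_cast
    nlinarith

lemma add_two_le_two_mul_term_succ (hL : 0 < L) (hapos : ∀ k, 0 < a (k + 1)) (hA0 : A 0 = 0)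
    (hAk : ∀ k, A (k + 1) = A k + a (k + 1))
    (ha : ∀ k, a (k + 1) ^ 2 / (A k + a (k + 1)) ≥ 1 / L) (k : ℕ) :
    (k : ℝ) + 2 ≤ 2 * L * a (k + 1) := by
  have := add_one_le_of_add_le_mul_sq (partialSum_nonneg hapos hA0 hAk k) (hapos k)
    (partialSum_le_mul_sq hL hapos hA0 hAk ha k) (m := k + 1)
    (by linarith [sq_add_two_mul_le_partialSum hL hapos hA0 hAk ha k])
  linarith

lemma sq_le_partialSum_succ (hL : 0 < L) (hapos : ∀ k, 0 < a (k + 1)) (hA0 : A 0 = 0)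
    (hAk : ∀ k, A (k + 1) = A k + a (k + 1))
    (ha : ∀ k, a (k + 1) ^ 2 / (A k + a (k + 1)) ≥ 1 / L) (k : ℕ) :
    ((k : ℝ) + 2) ^ 2 ≤ 4 * L * A (k + 1) := by
  rw [hAk]
  nlinarith [sq_add_two_mul_le_partialSum hL hapos hA0 hAk ha k,
    add_two_le_two_mul_term_succ hL hapos hA0 hAk ha k]

end Growth

/-- Growth of the coefficient sequence: if `A 0 = 0`,
`A (k+1) = A k + a (k+1)` with `a (k+1) > 0` and
`a (k+1) ^ 2 / (A k + a (k+1)) ≥ 1 / L`, then `a k ≥ k / (2L)` and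
`A k ≥ (k+1)² / (4L) ≥ k² / (4L)` for all `k ≥ 1`. -/
theorem stmt_1 (L : ℝ) (hL : 0 < L) (a A : ℕ → ℝ)
    (hapos : ∀ k, 0 < a (k + 1))
    (hA0 : A 0 = 0) (hAk : ∀ k, A (k + 1) = A k + a (k + 1))
    (ha : ∀ k, (a (k + 1)) ^ 2 / (A k + a (k + 1)) ≥ 1 / L) :
    ∀ k : ℕ, 1 ≤ k → (k : ℝ) / (2 * L) ≤ a k ∧
      ((k : ℝ) + 1) ^ 2 / (4 * L) ≤ A k ∧ (k : ℝ) ^ 2 / (4 * L) ≤ A k := by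
  intro k hk
  obtain ⟨n, rfl⟩ : ∃ n, k = n + 1 := ⟨k - 1, by omega⟩
  have hterm := add_two_le_two_mul_term_succ hL hapos hA0 hAk ha n
  have hsum := sq_le_partialSum_succ hL hapos hA0 hAk ha n
  push_cast
  refine ⟨?_, ?_, ?_⟩ <;> rw [div_le_iff₀ (by positivity)]
  · linarith
  · linarith
  · nlinarith
end

section
/- Let f: ℝ^n → ℝ be L-smooth and γ-weakly-quasi-convex with minimizer x*, γ ∈ (0,1]. Suppose sequences (x^k), (y^k), weights (a_k), (A_k) with A_k = Σ_{i=1}^k a_i and estimating functions ψ_k(x) = (1/2)‖x − x^0‖₂² + Σ_{i=0}^{k−1} a_{i+1}(f(y^i) + ⟨∇f(y^i), x − y^i⟩) are generated by Algorithm AGMsDR, so that A_k f(x^k) ≤ min_x ψ_k(x) and f(y^i) ≤ f(x^i) ≤ f(x^0) for all i. Then for every k: A_k (f(x^k) − f(x*)) ≤ (1 − γ) A_k (f(x^0) − f(x*)) + (1/2)‖x* − x^0‖₂². -/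
open scoped RealInnerProductSpace

/-! Evaluate the estimating function `ψ k` at the minimizer `x*`. Weak quasi-convexity bounds each
linearization `f (y i) + ⟪∇f (y i), x* - y i⟫` by `(1 - γ) f (y i) + γ f x*`, and
`f (y i) ≤ f (x 0)` turns this into a bound independent of `i`; summing with the weights
`a (i + 1)` produces `A k`. -/

lemma linearization_le_of_weakQuasiConvex {E : Type*} [NormedAddCommGroup E]
    [InnerProductSpace ℝ E] {γ F Fstar c : ℝ} {v y xstar : E} (hγ : γ ≤ 1)
    (hwqc : γ * (F - Fstar) ≤ ⟪v, y - xstar⟫) (hF : F ≤ c) :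
    F + ⟪v, xstar - y⟫ ≤ (1 - γ) * c + γ * Fstar := by
  have hneg : ⟪v, xstar - y⟫ = -⟪v, y - xstar⟫ := by rw [← inner_neg_right, neg_sub]
  have hmono : (1 - γ) * F ≤ (1 - γ) * c := mul_le_mul_of_nonneg_left hF (by linarith)
  rw [hneg]
  linarith

theorem stmt_4_general (n : ℕ) (γ : ℝ) (hγ : γ ∈ Set.Ioc (0 : ℝ) 1)
    (f : EuclideanSpace ℝ (Fin n) → ℝ)
    (g : EuclideanSpace ℝ (Fin n) → EuclideanSpace ℝ (Fin n))
    (xstar : EuclideanSpace ℝ (Fin n))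
    (hwqc : ∀ z, γ * (f z - f xstar) ≤ ⟪g z, z - xstar⟫)
    (x y : ℕ → EuclideanSpace ℝ (Fin n)) (a A : ℕ → ℝ)
    (hapos : ∀ i, 0 < a (i + 1))
    (hA : ∀ k, A k = ∑ i ∈ Finset.range k, a (i + 1))
    (hψ : ∀ k (z : EuclideanSpace ℝ (Fin n)), A k * f (x k) ≤
      (1 / 2) * ‖z - x 0‖ ^ 2 +
        ∑ i ∈ Finset.range k, a (i + 1) * (f (y i) + ⟪g (y i), z - y i⟫))
    (hyx : ∀ i, f (y i) ≤ f (x i)) (hx0 : ∀ i, f (x i) ≤ f (x 0)) :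
    ∀ k, A k * (f (x k) - f xstar) ≤
      (1 - γ) * A k * (f (x 0) - f xstar) + (1 / 2) * ‖xstar - x 0‖ ^ 2 := by
  intro k
  have hsum : ∑ i ∈ Finset.range k, a (i + 1) * (f (y i) + ⟪g (y i), xstar - y i⟫) ≤
      A k * ((1 - γ) * f (x 0) + γ * f xstar) := by
    rw [hA k, Finset.sum_mul]
    refine Finset.sum_le_sum fun i _ => mul_le_mul_of_nonneg_left ?_ (hapos i).le
    exact linearization_le_of_weakQuasiConvex hγ.2 (hwqc (y i)) ((hyx i).trans (hx0 i))
  linarith [hψ k xstar]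

/-- (Lemma 1 of the paper.) For an `L`-smooth, `γ`-weakly-quasi-convex `f`
with minimizer `x*`, the AGMsDR estimating-sequence guarantee
`A k * f (x k) ≤ min_x ψ k x` with `f (y i) ≤ f (x i) ≤ f (x 0)` implies
`A k (f (x k) - f x*) ≤ (1 - γ) A k (f (x 0) - f x*) + (1/2)‖x* - x 0‖²`. -/
theorem stmt_4 (n : ℕ) (L γ : ℝ) (hL : 0 < L) (hγ : γ ∈ Set.Ioc (0 : ℝ) 1)
    (f : EuclideanSpace ℝ (Fin n) → ℝ)
    (g : EuclideanSpace ℝ (Fin n) → EuclideanSpace ℝ (Fin n))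
    (hdiff : ∀ z, HasGradientAt f (g z) z)
    (hlip : ∀ z w, ‖g z - g w‖ ≤ L * ‖z - w‖)
    (xstar : EuclideanSpace ℝ (Fin n)) (hstar : ∀ z, f xstar ≤ f z)
    (hwqc : ∀ z, γ * (f z - f xstar) ≤ ⟪g z, z - xstar⟫)
    (x y : ℕ → EuclideanSpace ℝ (Fin n)) (a A : ℕ → ℝ)
    (hapos : ∀ i, 0 < a (i + 1))
    (hA : ∀ k, A k = ∑ i ∈ Finset.range k, a (i + 1))
    (hψ : ∀ k (z : EuclideanSpace ℝ (Fin n)), A k * f (x k) ≤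
      (1 / 2) * ‖z - x 0‖ ^ 2 +
        ∑ i ∈ Finset.range k, a (i + 1) * (f (y i) + ⟪g (y i), z - y i⟫))
    (hyx : ∀ i, f (y i) ≤ f (x i)) (hx0 : ∀ i, f (x i) ≤ f (x 0)) :
    ∀ k, A k * (f (x k) - f xstar) ≤
      (1 - γ) * A k * (f (x 0) - f xstar) + (1 / 2) * ‖xstar - x 0‖ ^ 2 :=
  stmt_4_general n γ hγ f g xstar hwqc x y a A hapos hA hψ hyx hx0
end

section
/- Let f: ℝ^n → ℝ be L-smooth and 1-weakly-quasi-convex with minimizer x*. Let (x^k) be generated by Algorithm AGMsDR started from x^0 (so that A_N f(x^N) ≤ min_x ψ_N(x), A_N ≥ N²/(4L), and the weakly-quasi-convex estimate holds). Then after N steps, f(x^N) − f(x*) ≤ 4L·V(x*, x^0)/N², where V(x*, x^0) = (1/2)‖x* − x^0‖₂². -/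
open scoped RealInnerProductSpace

/-!
Weak quasi-convexity says that every linear model `f (y) + ⟪∇f (y), x* - y⟫` lies below `f x*`.
Evaluating the estimate function `ψ_N` at `x*` therefore gives `A_N f (x^N) ≤ V(x*, x⁰) + A_N f x*`,
and dividing by `A_N ≥ N² / (4L)` yields the rate.
-/

section WeaklyQuasiConvex

variable {E : Type*} [NormedAddCommGroup E] [InnerProductSpace ℝ E]

theorem linear_model_le_of_weakly_quasi_convex {f : E → ℝ} {g : E → E} {xstar : E}
    (hwqc : ∀ z, f z - f xstar ≤ ⟪g z, z - xstar⟫) (y : E) :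
    f y + ⟪g y, xstar - y⟫ ≤ f xstar := by
  have hflip : ⟪g y, xstar - y⟫ = -⟪g y, y - xstar⟫ := by
    rw [← inner_neg_right, neg_sub]
  linarith [hwqc y]

theorem sum_linear_models_le_of_weakly_quasi_convex {f : E → ℝ} {g : E → E} {xstar : E}
    (hwqc : ∀ z, f z - f xstar ≤ ⟪g z, z - xstar⟫) (y : ℕ → E) (a : ℕ → ℝ)
    (ha : ∀ i, 0 ≤ a i) (s : Finset ℕ) :
    ∑ i ∈ s, a i * (f (y i) + ⟪g (y i), xstar - y i⟫) ≤ (∑ i ∈ s, a i) * f xstar := by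
  rw [Finset.sum_mul]
  exact Finset.sum_le_sum fun i _ =>
    mul_le_mul_of_nonneg_left (linear_model_le_of_weakly_quasi_convex hwqc (y i)) (ha i)

end WeaklyQuasiConvex

theorem le_div_of_mul_le_of_sq_div_le {A δ V L N : ℝ} (hL : 0 < L) (hN : 0 < N)
    (hV : 0 ≤ V) (hδ : A * δ ≤ V) (hA : N ^ 2 / (4 * L) ≤ A) :
    δ ≤ 4 * L * V / N ^ 2 := by
  have hApos : 0 < A := lt_of_lt_of_le (by positivity) hA
  calc δ ≤ V / A := (le_div_iff₀ hApos).mpr (by linarith)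
    _ ≤ V / (N ^ 2 / (4 * L)) := div_le_div_of_nonneg_left hV (by positivity) hA
    _ = 4 * L * V / N ^ 2 := by field_simp

theorem stmt_5_general (n : ℕ) (L : ℝ) (hL : 0 < L)
    (f : EuclideanSpace ℝ (Fin n) → ℝ)
    (g : EuclideanSpace ℝ (Fin n) → EuclideanSpace ℝ (Fin n))
    (xstar : EuclideanSpace ℝ (Fin n))
    (hwqc : ∀ z, f z - f xstar ≤ ⟪g z, z - xstar⟫)
    (x y : ℕ → EuclideanSpace ℝ (Fin n)) (a A : ℕ → ℝ)
    (hapos : ∀ i, 0 < a (i + 1))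
    (hA : ∀ k, A k = ∑ i ∈ Finset.range k, a (i + 1))
    (hψ : ∀ k (z : EuclideanSpace ℝ (Fin n)), A k * f (x k) ≤
      (1 / 2) * ‖z - x 0‖ ^ 2 +
        ∑ i ∈ Finset.range k, a (i + 1) * (f (y i) + ⟪g (y i), z - y i⟫))
    (hArate : ∀ k : ℕ, (k : ℝ) ^ 2 / (4 * L) ≤ A k)
    (N : ℕ) (hN : 0 < N) :
    f (x N) - f xstar ≤ 4 * L * ((1 / 2) * ‖xstar - x 0‖ ^ 2) / (N : ℝ) ^ 2 := by
  have hmodels := sum_linear_models_le_of_weakly_quasi_convex hwqc y (fun i => a (i + 1))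
    (fun i => (hapos i).le) (Finset.range N)
  rw [← hA N] at hmodels
  have hgap : A N * (f (x N) - f xstar) ≤ (1 / 2) * ‖xstar - x 0‖ ^ 2 := by
    linarith [hψ N xstar]
  exact le_div_of_mul_le_of_sq_div_le hL (by exact_mod_cast hN) (by positivity) hgap (hArate N)

/-- (Second half of Theorem 3 of the paper.) For an `L`-smooth,
`1`-weakly-quasi-convex `f` with minimizer `x*`, the AGMsDR guarantees
`A N * f (x N) ≤ min_x ψ N x` and `A N ≥ N²/(4L)` imply
`f (x N) - f x* ≤ 4 L V(x*, x⁰) / N²` with `V(x*, x⁰) = (1/2)‖x* - x⁰‖²`. -/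
theorem stmt_5 (n : ℕ) (L : ℝ) (hL : 0 < L)
    (f : EuclideanSpace ℝ (Fin n) → ℝ)
    (g : EuclideanSpace ℝ (Fin n) → EuclideanSpace ℝ (Fin n))
    (hdiff : ∀ z, HasGradientAt f (g z) z)
    (hlip : ∀ z w, ‖g z - g w‖ ≤ L * ‖z - w‖)
    (xstar : EuclideanSpace ℝ (Fin n)) (hstar : ∀ z, f xstar ≤ f z)
    (hwqc : ∀ z, f z - f xstar ≤ ⟪g z, z - xstar⟫)
    (x y : ℕ → EuclideanSpace ℝ (Fin n)) (a A : ℕ → ℝ)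
    (hapos : ∀ i, 0 < a (i + 1))
    (hA : ∀ k, A k = ∑ i ∈ Finset.range k, a (i + 1))
    (hψ : ∀ k (z : EuclideanSpace ℝ (Fin n)), A k * f (x k) ≤
      (1 / 2) * ‖z - x 0‖ ^ 2 +
        ∑ i ∈ Finset.range k, a (i + 1) * (f (y i) + ⟪g (y i), z - y i⟫))
    (hArate : ∀ k : ℕ, (k : ℝ) ^ 2 / (4 * L) ≤ A k)
    (N : ℕ) (hN : 0 < N) :
    f (x N) - f xstar ≤ 4 * L * ((1 / 2) * ‖xstar - x 0‖ ^ 2) / (N : ℝ) ^ 2 :=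
  stmt_5_general n L hL f g xstar hwqc x y a A hapos hA hψ hArate N hN
end

section
/- Let f: ℝ^n → ℝ be L-smooth and 1-weakly-quasi-convex with minimizer x*. Let (x^k), (y^k) be generated by Algorithm AGMsDR, so that f(x^{k+1}) ≤ f(y^k) − (1/(2L))‖∇f(y^k)‖₂², f(y^k) ≤ f(x^k), and f(x^k) − f(x*) ≤ 4L·V(x*, x^0)/k² for all k. Then after N steps, min_{⌈N/2⌉ ≤ k ≤ N} ‖∇f(y^k)‖₂² ≤ 64 L² V(x*, x^0)/N³, where V(x*, x^0) = (1/2)‖x* − x^0‖₂². -/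
/-!
Along the AGMsDR iterates the gap `a k = f (x k) - f x*` drops by at least `‖∇f (y k)‖² / (2L)`
per step, so summing over the window `⌈N/2⌉ ≤ k ≤ N` bounds the total squared gradient by the gap at
`k = ⌈N/2⌉`, which the `O(1/k²)` rate makes `O(1/N²)`. The window has about `N/2` indices, so the
smallest squared gradient in it is `O(1/N³)`.
-/

open scoped RealInnerProductSpace

open Finset

theorem sum_Ico_le_sub_of_add_le {a d : ℕ → ℝ} (hdesc : ∀ k, a (k + 1) + d k ≤ a k) {m n : ℕ}
    (hmn : m ≤ n) : ∑ k ∈ Ico m n, d k ≤ a m - a n :=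
  calc ∑ k ∈ Ico m n, d k ≤ ∑ k ∈ Ico m n, -(a (k + 1) - a k) :=
        sum_le_sum fun k _ => by linarith [hdesc k]
    _ = a m - a n := by rw [sum_neg_distrib, sum_Ico_sub a hmn, neg_sub]

theorem exists_le_div_card_of_sum_le {ι : Type*} {s : Finset ι} (hs : s.Nonempty) {f : ι → ℝ}
    {C : ℝ} (h : ∑ i ∈ s, f i ≤ C) : ∃ i ∈ s, f i ≤ C / #s := by
  refine exists_le_of_sum_le hs ?_
  rwa [sum_const, nsmul_eq_mul, mul_div_cancel₀ _ (by exact_mod_cast hs.card_ne_zero)]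

theorem cube_le_eight_mul_card_mul_sq_half (N : ℕ) :
    N ^ 3 ≤ 8 * (N + 1 - (N + 1) / 2) * ((N + 1) / 2) ^ 2 :=
  calc N ^ 3 ≤ (N + 1) * N ^ 2 := by rw [pow_succ']; gcongr; omega
    _ ≤ 2 * (N + 1 - (N + 1) / 2) * (2 * ((N + 1) / 2)) ^ 2 := by gcongr <;> omega
    _ = 8 * (N + 1 - (N + 1) / 2) * ((N + 1) / 2) ^ 2 := by ring

theorem exists_mem_Icc_half_le_of_descent_of_rate {a G : ℕ → ℝ} {c R : ℝ} (ha : ∀ k, 0 ≤ a k)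
    (hdesc : ∀ k, a (k + 1) + c * G k ≤ a k) (hrate : ∀ k, 1 ≤ k → a k ≤ R / (k : ℝ) ^ 2)
    {N : ℕ} (hN : 0 < N) :
    ∃ k, (N + 1) / 2 ≤ k ∧ k ≤ N ∧ c * G k ≤ 8 * R / (N : ℝ) ^ 3 := by
  set m := (N + 1) / 2
  have hm : 1 ≤ m := by omega
  have hm_pos : (0 : ℝ) < (m : ℝ) ^ 2 := by positivity
  have hR : 0 ≤ R := by
    have := (ha m).trans (hrate m hm)
    rwa [le_div_iff₀ hm_pos, zero_mul] at this
  have hsum : ∑ k ∈ Ico m (N + 1), c * G k ≤ R / (m : ℝ) ^ 2 :=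
    calc ∑ k ∈ Ico m (N + 1), c * G k ≤ a m - a (N + 1) :=
          sum_Ico_le_sub_of_add_le hdesc (by omega)
      _ ≤ R / (m : ℝ) ^ 2 := by linarith [ha (N + 1), hrate m hm]
  obtain ⟨k, hk, hGk⟩ := exists_le_div_card_of_sum_le (nonempty_Ico.2 (by omega)) hsum
  rw [mem_Ico] at hk
  refine ⟨k, hk.1, by omega, hGk.trans ?_⟩
  have hcube : (N : ℝ) ^ 3 ≤ 8 * ((N + 1 - m : ℕ) : ℝ) * (m : ℝ) ^ 2 := by
    exact_mod_cast cube_le_eight_mul_card_mul_sq_half N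
  have hcard : (0 : ℝ) < ((N + 1 - m : ℕ) : ℝ) := by exact_mod_cast (by omega : 0 < N + 1 - m)
  rw [Nat.card_Ico, div_div, div_le_div_iff₀ (by positivity) (by positivity)]
  nlinarith [mul_le_mul_of_nonneg_left hcube hR]

theorem stmt_6_general (n : ℕ) (L : ℝ) (hL : 0 < L)
    (f : EuclideanSpace ℝ (Fin n) → ℝ)
    (g : EuclideanSpace ℝ (Fin n) → EuclideanSpace ℝ (Fin n))
    (xstar : EuclideanSpace ℝ (Fin n)) (hstar : ∀ z, f xstar ≤ f z)
    (x y : ℕ → EuclideanSpace ℝ (Fin n))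
    (hdec : ∀ k, f (x (k + 1)) ≤ f (y k) - 1 / (2 * L) * ‖g (y k)‖ ^ 2)
    (hmono : ∀ k, f (y k) ≤ f (x k))
    (hrate : ∀ k : ℕ, 1 ≤ k →
      f (x k) - f xstar ≤ 4 * L * ((1 / 2) * ‖xstar - x 0‖ ^ 2) / (k : ℝ) ^ 2)
    (N : ℕ) (hN : 0 < N) :
    ∃ k : ℕ, (N + 1) / 2 ≤ k ∧ k ≤ N ∧
      ‖g (y k)‖ ^ 2 ≤ 64 * L ^ 2 * ((1 / 2) * ‖xstar - x 0‖ ^ 2) / (N : ℝ) ^ 3 := by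
  set V := (1 / 2) * ‖xstar - x 0‖ ^ 2
  obtain ⟨k, hmk, hkN, hk⟩ := exists_mem_Icc_half_le_of_descent_of_rate
    (a := fun k => f (x k) - f xstar) (G := fun k => ‖g (y k)‖ ^ 2) (c := 1 / (2 * L))
    (fun k => sub_nonneg.2 (hstar _)) (fun k => by linarith [hdec k, hmono k]) hrate hN
  refine ⟨k, hmk, hkN, ?_⟩
  calc ‖g (y k)‖ ^ 2 = 2 * L * (1 / (2 * L) * ‖g (y k)‖ ^ 2) := by field_simp
    _ ≤ 2 * L * (8 * (4 * L * V) / (N : ℝ) ^ 3) := by gcongr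
    _ = 64 * L ^ 2 * V / (N : ℝ) ^ 3 := by ring

/-- (First half of Theorem 3 of the paper.) For an `L`-smooth,
`1`-weakly-quasi-convex `f` with minimizer `x*`, the AGMsDR guarantees
`f (x (k+1)) ≤ f (y k) - (1/(2L))‖∇f (y k)‖²`, `f (y k) ≤ f (x k)` and
`f (x k) - f x* ≤ 4 L V(x*, x⁰)/k²` imply that after `N` steps
`min_{⌈N/2⌉ ≤ k ≤ N} ‖∇f (y k)‖² ≤ 64 L² V(x*, x⁰) / N³`,
where `V(x*, x⁰) = (1/2)‖x* - x⁰‖²`. -/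
theorem stmt_6 (n : ℕ) (L : ℝ) (hL : 0 < L)
    (f : EuclideanSpace ℝ (Fin n) → ℝ)
    (g : EuclideanSpace ℝ (Fin n) → EuclideanSpace ℝ (Fin n))
    (hdiff : ∀ z, HasGradientAt f (g z) z)
    (hlip : ∀ z w, ‖g z - g w‖ ≤ L * ‖z - w‖)
    (xstar : EuclideanSpace ℝ (Fin n)) (hstar : ∀ z, f xstar ≤ f z)
    (hwqc : ∀ z, f z - f xstar ≤ ⟪g z, z - xstar⟫)
    (x y : ℕ → EuclideanSpace ℝ (Fin n))
    (hdec : ∀ k, f (x (k + 1)) ≤ f (y k) - 1 / (2 * L) * ‖g (y k)‖ ^ 2)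
    (hmono : ∀ k, f (y k) ≤ f (x k))
    (hrate : ∀ k : ℕ, 1 ≤ k →
      f (x k) - f xstar ≤ 4 * L * ((1 / 2) * ‖xstar - x 0‖ ^ 2) / (k : ℝ) ^ 2)
    (N : ℕ) (hN : 0 < N) :
    ∃ k : ℕ, (N + 1) / 2 ≤ k ∧ k ≤ N ∧
      ‖g (y k)‖ ^ 2 ≤ 64 * L ^ 2 * ((1 / 2) * ‖xstar - x 0‖ ^ 2) / (N : ℝ) ^ 3 :=
  stmt_6_general n L hL f g xstar hstar x y hdec hmono hrate N hN
end

section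
/- Let f: ℝ^n → ℝ be convex and differentiable with minimizer x*, and let R = ‖x^0 − x*‖₂. Given points y^0,…,y^{k−1}, positive weights a_1,…,a_k with A_k = Σ_{i=1}^k a_i, let l^{k−1}(x) = Σ_{i=0}^{k−1} a_{i+1}(f(y^i) + ⟨∇f(y^i), x − y^i⟩), define f̂^k = min_{‖x − x^0‖₂ ≤ R} (1/A_k) l^{k−1}(x), and suppose x^k satisfies A_k f(x^k) ≤ min_{x∈ℝ^n} [ (1/2)‖x^0 − x‖₂² + l^{k−1}(x) ] (as guaranteed by Algorithm AGMsDR). Then f̂^k ≥ (1/A_k) min_x[(1/2)‖x^0−x‖₂² + l^{k−1}(x)] − R²/(2A_k), f̂^k ≤ f(x*), and consequently f(x^k) − f(x*) ≤ f(x^k) − f̂^k ≤ R²/(2A_k). In particular, the condition f(x^k) − f̂^k ≤ ε guarantees f(x^k) − f(x*) ≤ ε. -/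
/-!
Convexity makes every linearization `f (y i) + ⟪∇f (y i), x - y i⟫` a lower bound for `f`, so
`l ≤ A_k f` and the minimum `f̂` of `l / A_k` over the ball `‖x - x⁰‖ ≤ R` is at most `f x*`,
because `x*` lies in that ball. Conversely, evaluating `½‖x⁰ - x‖² + l x` at a minimizer `z` of
`l` over the ball gives `min_x [½‖x⁰ - x‖² + l x] ≤ R²/2 + A_k f̂`, which takes the place of the
duality argument; together with `A_k f(x^k) ≤ min_x [½‖x⁰ - x‖² + l x]` it bounds the gap
`f(x^k) - f̂` by `R²/(2 A_k)`.
-/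

open scoped RealInnerProductSpace

theorem ConvexOn.add_fderiv_sub_le {E : Type*} [NormedAddCommGroup E] [NormedSpace ℝ E]
    {s : Set E} {f : E → ℝ} {f' : E →L[ℝ] ℝ} {x y : E} (hf : ConvexOn ℝ s f)
    (hy : y ∈ s) (hx : x ∈ s) (hf' : HasFDerivAt f f' y) : f y + f' (x - y) ≤ f x := by
  let φ : ℝ →ᵃ[ℝ] E := AffineMap.lineMap y x
  have hderiv : HasDerivAt (f ∘ φ) (f' (x - y)) 0 := by
    rw [← AffineMap.lineMap_apply_zero y x (k := ℝ)] at hf'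
    exact hf'.comp_hasDerivAt 0 AffineMap.hasDerivAt_lineMap
  have hslope : slope (f ∘ φ) 0 1 = f x - f y := by simp [slope, φ]
  have := (hf.comp_affineMap φ).le_slope_of_hasDerivAt (by simpa [φ]) (by simpa [φ])
    zero_lt_one hderiv
  linarith [hslope ▸ this]

theorem ConvexOn.add_inner_sub_le {F : Type*} [NormedAddCommGroup F] [InnerProductSpace ℝ F]
    [CompleteSpace F] {s : Set F} {f : F → ℝ} {g x y : F} (hf : ConvexOn ℝ s f)
    (hy : y ∈ s) (hx : x ∈ s) (hg : HasGradientAt f g y) : f y + ⟪g, x - y⟫ ≤ f x :=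
  hf.add_fderiv_sub_le hy hx hg.hasFDerivAt

theorem ConvexOn.sum_mul_add_inner_sub_le {F ι : Type*} [NormedAddCommGroup F]
    [InnerProductSpace ℝ F] [CompleteSpace F] {s : Set F} {f : F → ℝ} {g y : ι → F} {x : F}
    {t : Finset ι} {w : ι → ℝ} (hf : ConvexOn ℝ s f) (hw : ∀ i ∈ t, 0 ≤ w i)
    (hy : ∀ i ∈ t, y i ∈ s) (hx : x ∈ s) (hg : ∀ i ∈ t, HasGradientAt f (g i) (y i)) :
    ∑ i ∈ t, w i * (f (y i) + ⟪g i, x - y i⟫) ≤ (∑ i ∈ t, w i) * f x := by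
  rw [Finset.sum_mul]
  exact Finset.sum_le_sum fun i hi ↦
    mul_le_mul_of_nonneg_left (hf.add_inner_sub_le (hy i hi) hx (hg i hi)) (hw i hi)

theorem IsLeast.le_of_le_mul {α : Type*} {s : Set α} {f l : α → ℝ} {A m : ℝ} {x : α}
    (hm : IsLeast ((fun z ↦ 1 / A * l z) '' s) m) (hA : 0 < A) (hl : l x ≤ A * f x)
    (hx : x ∈ s) : m ≤ f x :=
  calc m ≤ 1 / A * l x := hm.2 ⟨x, hx, rfl⟩
    _ ≤ 1 / A * (A * f x) := by gcongr
    _ = f x := by field_simp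

theorem iInf_half_sq_add_le_of_isLeast {E : Type*} [SeminormedAddCommGroup E] {l : E → ℝ}
    {A R m : ℝ} {x0 : E} (hA : A ≠ 0)
    (hbdd : BddBelow (Set.range fun z ↦ 1 / 2 * ‖x0 - z‖ ^ 2 + l z))
    (hm : IsLeast ((fun z ↦ 1 / A * l z) '' {z | ‖z - x0‖ ≤ R}) m) :
    ⨅ z, (1 / 2 * ‖x0 - z‖ ^ 2 + l z) ≤ R ^ 2 / 2 + A * m := by
  obtain ⟨z, hz, rfl⟩ := hm.1
  have hzR : ‖x0 - z‖ ^ 2 ≤ R ^ 2 :=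
    pow_le_pow_left₀ (norm_nonneg _) (norm_sub_rev x0 z ▸ hz) 2
  calc ⨅ z, (1 / 2 * ‖x0 - z‖ ^ 2 + l z) ≤ 1 / 2 * ‖x0 - z‖ ^ 2 + l z := ciInf_le hbdd z
    _ ≤ R ^ 2 / 2 + A * (1 / A * l z) := by field_simp; linarith

theorem stmt_7_general (n : ℕ)
    (f : EuclideanSpace ℝ (Fin n) → ℝ)
    (g : EuclideanSpace ℝ (Fin n) → EuclideanSpace ℝ (Fin n))
    (hdiff : ∀ z, HasGradientAt f (g z) z)
    (hconv : ConvexOn ℝ Set.univ f)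
    (xstar : EuclideanSpace ℝ (Fin n))
    (x0 : EuclideanSpace ℝ (Fin n)) (R : ℝ) (hR : R = ‖x0 - xstar‖)
    (k : ℕ) (hk : 0 < k)
    (y : ℕ → EuclideanSpace ℝ (Fin n)) (a : ℕ → ℝ) (hapos : ∀ i, 0 < a (i + 1))
    (Ak : ℝ) (hAk : Ak = ∑ i ∈ Finset.range k, a (i + 1))
    (l : EuclideanSpace ℝ (Fin n) → ℝ)
    (hl : ∀ z, l z = ∑ i ∈ Finset.range k, a (i + 1) * (f (y i) + ⟪g (y i), z - y i⟫))
    (fhat : ℝ)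
    (hfhat : IsLeast ((fun z => (1 / Ak) * l z) '' {z | ‖z - x0‖ ≤ R}) fhat)
    (xk : EuclideanSpace ℝ (Fin n))
    (hxk : ∀ z, Ak * f xk ≤ (1 / 2) * ‖x0 - z‖ ^ 2 + l z) :
    ((1 / Ak) * (⨅ z : EuclideanSpace ℝ (Fin n), ((1 / 2) * ‖x0 - z‖ ^ 2 + l z))
        - R ^ 2 / (2 * Ak) ≤ fhat) ∧
      fhat ≤ f xstar ∧
      (f xk - f xstar ≤ f xk - fhat ∧ f xk - fhat ≤ R ^ 2 / (2 * Ak)) ∧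
      (∀ ε : ℝ, f xk - fhat ≤ ε → f xk - f xstar ≤ ε) := by
  have hA : 0 < Ak := hAk ▸ Finset.sum_pos (fun i _ ↦ hapos i) (by simpa using hk.ne')
  have hmodel : ∀ x, l x ≤ Ak * f x := fun x ↦ hl x ▸ hAk ▸
    hconv.sum_mul_add_inner_sub_le (fun i _ ↦ (hapos i).le) (fun _ _ ↦ trivial) trivial
      (fun i _ ↦ hdiff (y i))
  have hfhat_le : fhat ≤ f xstar :=
    hfhat.le_of_le_mul hA (hmodel xstar) (hR ▸ (norm_sub_rev _ _).le)
  have hbdd : BddBelow (Set.range fun z ↦ 1 / 2 * ‖x0 - z‖ ^ 2 + l z) :=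
    ⟨Ak * f xk, Set.forall_mem_range.2 hxk⟩
  set ψ := ⨅ z : EuclideanSpace ℝ (Fin n), ((1 / 2) * ‖x0 - z‖ ^ 2 + l z)
  have hψ_lower : Ak * f xk ≤ ψ := le_ciInf hxk
  have hψ_upper : ψ ≤ R ^ 2 / 2 + Ak * fhat :=
    iInf_half_sq_add_le_of_isLeast hA.ne' hbdd hfhat
  have hgap : f xk - fhat ≤ R ^ 2 / (2 * Ak) := by
    rw [le_div_iff₀ (by positivity)]
    linarith
  refine ⟨?_, hfhat_le, ⟨by linarith, hgap⟩, fun ε hε ↦ by linarith⟩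
  calc 1 / Ak * ψ - R ^ 2 / (2 * Ak) = (ψ - R ^ 2 / 2) / Ak := by ring
    _ ≤ fhat := by rw [div_le_iff₀ hA]; linarith

/-- Online stopping criterion for the AGMsDR method: with
`l^{k-1}(x) = Σ_{i<k} a_{i+1} (f (y i) + ⟪∇f (y i), x - y i⟫)`,
`f̂^k = min_{‖x - x⁰‖ ≤ R} l^{k-1}(x) / A_k` and
`A_k f (x^k) ≤ min_x [ (1/2)‖x⁰ - x‖² + l^{k-1}(x) ]`, one has
`f̂^k ≥ (1/A_k) min_x [(1/2)‖x⁰ - x‖² + l^{k-1}(x)] - R²/(2 A_k)`, `f̂^k ≤ f x*`, and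
`f (x^k) - f x* ≤ f (x^k) - f̂^k ≤ R²/(2 A_k)`; in particular `f (x^k) - f̂^k ≤ ε`
guarantees `f (x^k) - f x* ≤ ε`. -/
theorem stmt_7 (n : ℕ)
    (f : EuclideanSpace ℝ (Fin n) → ℝ)
    (g : EuclideanSpace ℝ (Fin n) → EuclideanSpace ℝ (Fin n))
    (hdiff : ∀ z, HasGradientAt f (g z) z)
    (hconv : ConvexOn ℝ Set.univ f)
    (xstar : EuclideanSpace ℝ (Fin n)) (hstar : ∀ z, f xstar ≤ f z)
    (x0 : EuclideanSpace ℝ (Fin n)) (R : ℝ) (hR : R = ‖x0 - xstar‖)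
    (k : ℕ) (hk : 0 < k)
    (y : ℕ → EuclideanSpace ℝ (Fin n)) (a : ℕ → ℝ) (hapos : ∀ i, 0 < a (i + 1))
    (Ak : ℝ) (hAk : Ak = ∑ i ∈ Finset.range k, a (i + 1))
    (l : EuclideanSpace ℝ (Fin n) → ℝ)
    (hl : ∀ z, l z = ∑ i ∈ Finset.range k, a (i + 1) * (f (y i) + ⟪g (y i), z - y i⟫))
    (fhat : ℝ)
    (hfhat : IsLeast ((fun z => (1 / Ak) * l z) '' {z | ‖z - x0‖ ≤ R}) fhat)
    (xk : EuclideanSpace ℝ (Fin n))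
    (hxk : ∀ z, Ak * f xk ≤ (1 / 2) * ‖x0 - z‖ ^ 2 + l z) :
    ((1 / Ak) * (⨅ z : EuclideanSpace ℝ (Fin n), ((1 / 2) * ‖x0 - z‖ ^ 2 + l z))
        - R ^ 2 / (2 * Ak) ≤ fhat) ∧
      fhat ≤ f xstar ∧
      (f xk - f xstar ≤ f xk - fhat ∧ f xk - fhat ≤ R ^ 2 / (2 * Ak)) ∧
      (∀ ε : ℝ, f xk - fhat ≤ ε → f xk - f xstar ≤ ε) :=
  stmt_7_general n f g hdiff hconv xstar x0 R hR k hk y a hapos Ak hAk l hl fhat hfhat xk hxk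
end

section
/- Let f: ℝ^n → ℝ be μ-strongly convex and L-smooth. Suppose sequences (x^k), (v^k), (y^k), positive reals (a_k), (A_k), (τ_k) and functions ψ_k satisfy: A_0 = 0, τ_0 = 1, x^0 = v^0, ψ_0(x) = (1/2)‖x − x^0‖₂²; for each k: β_k minimizes β ↦ f(v^k + β(x^k − v^k)) over [0,1] and y^k = v^k + β_k(x^k − v^k); x^{k+1} = y^k − (1/L)∇f(y^k); a_{k+1} > 0 solves a_{k+1}²/((τ_k + μ a_{k+1})(A_k + a_{k+1})) = 1/L; A_{k+1} = A_k + a_{k+1}, τ_{k+1} = τ_k + μ a_{k+1}; ψ_{k+1}(x) = ψ_k(x) + a_{k+1}(f(y^k) + ⟨∇f(y^k), x − y^k⟩ + (μ/2)‖x − y^k‖₂²); v^{k+1} = argmin_x ψ_{k+1}(x). Then for all k: A_k f(x^k) ≤ min_{x∈ℝ^n} ψ_k(x) = ψ_k(v^k), and A_k ≥ max{ k²/(4L), (1/L)(1 − √(μ/L))^{−(k−1)} }. -/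
open scoped RealInnerProductSpace


section Aux
variable {E : Type*} [NormedAddCommGroup E] [InnerProductSpace ℝ E]
variable [CompleteSpace E]


theorem line_deriv (f : E → ℝ) (g : E → E) (hdiff : ∀ z, HasGradientAt f (g z) z) (z w : E) (t : ℝ) :
    HasDerivAt (fun s : ℝ => f (z + s • (w - z))) ⟪g (z + t • (w - z)), w - z⟫ t := by
  have hc : HasDerivAt (fun s : ℝ => z + s • (w - z)) (w - z) t := by
    simpa using ((hasDerivAt_id t).smul_const (w - z)).const_add z
  have := (hdiff (z + t • (w - z))).hasFDerivAt.comp_hasDerivAt t hc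
  simp at this; exact this

theorem smooth_ub (L : ℝ) (hL : 0 < L) (f : E → ℝ) (g : E → E)
    (hdiff : ∀ z, HasGradientAt f (g z) z)
    (hlip : ∀ z w, ‖g z - g w‖ ≤ L * ‖z - w‖) (z w : E) :
    f w ≤ f z + ⟪g z, w - z⟫ + L / 2 * ‖w - z‖ ^ 2 := by
  set G : ℝ → ℝ := fun t => f (z + t • (w - z)) - t * ⟪g z, w - z⟫ - L / 2 * ‖w - z‖ ^ 2 * t ^ 2
    with hG
  have hG' : ∀ t : ℝ, HasDerivAt G
      (⟪g (z + t • (w - z)), w - z⟫ - ⟪g z, w - z⟫ - L * ‖w - z‖ ^ 2 * t) t := by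
    intro t
    have h1 := line_deriv f g hdiff z w t
    have h2 : HasDerivAt (fun t : ℝ => t * ⟪g z, w - z⟫) ⟪g z, w - z⟫ t := by
      simpa using (hasDerivAt_id t).mul_const ⟪g z, w - z⟫
    have h3 : HasDerivAt (fun t : ℝ => L / 2 * ‖w - z‖ ^ 2 * t ^ 2)
        (L * ‖w - z‖ ^ 2 * t) t := by
      have := (hasDerivAt_pow 2 t).const_mul (L / 2 * ‖w - z‖ ^ 2)
      exact this.congr_deriv (by simp; ring)
    exact (h1.sub h2).sub h3
  have hanti : AntitoneOn G (Set.Icc 0 1) := by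
    apply antitoneOn_of_deriv_nonpos (convex_Icc 0 1)
    · exact (fun t _ => (hG' t).differentiableAt.continuousAt.continuousWithinAt)
    · exact fun t _ => (hG' t).differentiableAt.differentiableWithinAt
    · intro t ht
      rw [interior_Icc] at ht
      rw [(hG' t).deriv]
      have hb : ‖g (z + t • (w - z)) - g z‖ ≤ L * (t * ‖w - z‖) := by
        have := hlip (z + t • (w - z)) z
        simpa [norm_smul, abs_of_pos ht.1] using this
      have h4 : ⟪g (z + t • (w - z)) - g z, w - z⟫ ≤ L * (t * ‖w - z‖) * ‖w - z‖ :=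
        le_trans (real_inner_le_norm _ _)
          (mul_le_mul_of_nonneg_right hb (norm_nonneg _))
      rw [inner_sub_left] at h4
      nlinarith [h4]
  have key : G 1 ≤ G 0 := hanti (by norm_num) (by norm_num) (by norm_num)
  simp only [hG, one_smul, zero_smul, add_zero, add_sub_cancel] at key
  nlinarith [key]


theorem quad_coeff_zero {A B : ℝ} (hB : 0 ≤ B) (h : ∀ t : ℝ, 0 ≤ A * t + B * t ^ 2) :
    A = 0 := by
  rcases eq_or_lt_of_le hB with hB0 | hB0
  · have h1 := h 1
    have h2 := h (-1)
    nlinarith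
  · have h1 := h (-A / (2 * B))
    have h2 : A * (-A / (2 * B)) + B * (-A / (2 * B)) ^ 2 = -(A ^ 2) / (4 * B) := by
      field_simp
      ring
    rw [h2] at h1
    have h3 : A ^ 2 ≤ 0 := by
      have := mul_le_mul_of_nonneg_right h1 (le_of_lt (mul_pos (by norm_num : (0:ℝ) < 4) hB0))
      rw [div_mul_cancel₀] at this <;> nlinarith
    nlinarith [sq_nonneg A]

theorem quad_min_expand (τ : ℝ) (hτ : 0 < τ) (b : E) (c : ℝ) (ψ : E → ℝ)
    (hq : ∀ z, ψ z = τ / 2 * ‖z‖ ^ 2 + ⟪b, z⟫ + c) (v : E)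
    (hmin : ∀ z, ψ v ≤ ψ z) (z : E) :
    ψ z = ψ v + τ / 2 * ‖z - v‖ ^ 2 := by
  set u := z - v with hu
  have key : τ * ⟪v, u⟫ + ⟪b, u⟫ = 0 := by
    apply quad_coeff_zero (B := τ / 2 * ‖u‖ ^ 2) (by positivity)
    intro t
    have hm := hmin (v + t • u)
    rw [hq, hq] at hm
    have hnorm : ‖v + t • u‖ ^ 2 = ‖v‖ ^ 2 + 2 * t * ⟪v, u⟫ + t ^ 2 * ‖u‖ ^ 2 := by
      rw [← real_inner_self_eq_norm_sq, ← real_inner_self_eq_norm_sq,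
        ← real_inner_self_eq_norm_sq, inner_add_add_self]
      simp [real_inner_smul_left, real_inner_smul_right, real_inner_comm u v, norm_smul, mul_pow,
        Real.norm_eq_abs, sq_abs]
      ring
    rw [hnorm, inner_add_right, real_inner_smul_right] at hm
    nlinarith [hm]
  have hz : z = v + u := by rw [hu]; abel
  rw [hq z, hq v, hz]
  have hnorm : ‖v + u‖ ^ 2 = ‖v‖ ^ 2 + 2 * ⟪v, u⟫ + ‖u‖ ^ 2 := by
    rw [← real_inner_self_eq_norm_sq, ← real_inner_self_eq_norm_sq,
      ← real_inner_self_eq_norm_sq, inner_add_add_self, real_inner_comm u v]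
    ring
  rw [hnorm, inner_add_right]
  linear_combination key


theorem jensen_two (α β : ℝ) (p q : E) :
    ‖α • p + β • q‖ ^ 2 = (α + β) * (α * ‖p‖ ^ 2 + β * ‖q‖ ^ 2) - α * β * ‖p - q‖ ^ 2 := by
  rw [← real_inner_self_eq_norm_sq, ← real_inner_self_eq_norm_sq, ← real_inner_self_eq_norm_sq,
    ← real_inner_self_eq_norm_sq, inner_add_add_self, inner_sub_sub_self]
  simp only [real_inner_smul_left, real_inner_smul_right]
  rw [real_inner_comm q p]
  ring

theorem complete_sq (σ a' : ℝ) (hσ : 0 < σ) (d gv : E) :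
    0 ≤ σ / 2 * ‖d‖ ^ 2 + a' * ⟪gv, d⟫ + a' ^ 2 / (2 * σ) * ‖gv‖ ^ 2 := by
  have hid : 2 * σ * (σ / 2 * ‖d‖ ^ 2 + a' * ⟪gv, d⟫ + a' ^ 2 / (2 * σ) * ‖gv‖ ^ 2)
      = ‖σ • d + a' • gv‖ ^ 2 := by
    rw [← real_inner_self_eq_norm_sq, ← real_inner_self_eq_norm_sq, ← real_inner_self_eq_norm_sq,
      inner_add_add_self]
    simp only [real_inner_smul_left, real_inner_smul_right]
    rw [real_inner_comm gv d]
    field_simp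
    ring
  nlinarith [sq_nonneg ‖σ • d + a' • gv‖, hσ]

theorem qlb (α β a' : ℝ) (hα : 0 < α) (hβ : 0 ≤ β) (ha' : 0 ≤ a')
    (v y z gv : E) (ht : 0 ≤ ⟪gv, v - y⟫) :
    -(a' ^ 2 / (2 * (α + β)) * ‖gv‖ ^ 2)
      ≤ α / 2 * ‖z - v‖ ^ 2 + β / 2 * ‖z - y‖ ^ 2 + a' * ⟪gv, z - y⟫ := by
  set σ := α + β with hσdef
  have hσ : 0 < σ := by positivity
  set c : E := (α / σ) • v + (β / σ) • y with hc
  set d : E := z - c with hd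
  have h1 : σ * ‖d‖ ^ 2 ≤ α * ‖z - v‖ ^ 2 + β * ‖z - y‖ ^ 2 := by
    have hsum : α • (z - v) + β • (z - y) = σ • d := by
      have e1 : σ • ((α / σ) • v) = α • v := by
        rw [smul_smul, mul_div_cancel₀ _ hσ.ne']
      have e2 : σ • ((β / σ) • y) = β • y := by
        rw [smul_smul, mul_div_cancel₀ _ hσ.ne']
      rw [hd, hc]
      simp only [smul_sub, smul_add]
      rw [e1, e2, hσdef, add_smul]
      module
    have hj := jensen_two α β (z - v) (z - y)
    rw [hsum] at hj
    have h2 : ‖σ • d‖ ^ 2 = σ ^ 2 * ‖d‖ ^ 2 := by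
      rw [norm_smul]; simp [mul_pow, sq_abs]
    have h3 : (0:ℝ) ≤ α * β * ‖(z - v) - (z - y)‖ ^ 2 := by positivity
    have h5 : σ * (σ * ‖d‖ ^ 2) ≤ σ * (α * ‖z - v‖ ^ 2 + β * ‖z - y‖ ^ 2) := by
      nlinarith [hj, h2, h3]
    exact (mul_le_mul_iff_right₀ hσ).mp h5
  have h2 : ⟪gv, z - y⟫ = ⟪gv, d⟫ + (α / σ) * ⟪gv, v - y⟫ := by
    have hβσ : (β / σ) = 1 - α / σ := by
      field_simp
      rw [hσdef]; ring
    have hzy : z - y = d + (α / σ) • (v - y) := by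
      rw [hd, hc, hβσ]
      module
    rw [hzy, inner_add_right, real_inner_smul_right]
  have h3 := complete_sq σ a' hσ d gv
  have h4 : 0 ≤ a' * ((α / σ) * ⟪gv, v - y⟫) := by positivity
  nlinarith [h1, h3, h4, h2]


theorem line_opt (μ L : ℝ) (hμ : 0 < μ) (hL : 0 < L) (f : E → ℝ) (g : E → E)
    (hlip : ∀ z w, ‖g z - g w‖ ≤ L * ‖z - w‖)
    (hsc : ∀ z w, f z + ⟪g z, w - z⟫ + (μ / 2) * ‖w - z‖ ^ 2 ≤ f w)
    (v x : E) (β : ℝ) (hβ : β ∈ Set.Icc (0:ℝ) 1)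
    (hmin : ∀ b ∈ Set.Icc (0:ℝ) 1, f (v + β • (x - v)) ≤ f (v + b • (x - v))) :
    0 ≤ ⟪g (v + β • (x - v)), x - (v + β • (x - v))⟫ ∧
      0 ≤ ⟪g (v + β • (x - v)), v - (v + β • (x - v))⟫ := by
  set y := v + β • (x - v) with hy
  set h : ℝ → ℝ := fun b => ⟪g (v + b • (x - v)), x - v⟫ with hh
  have hgcont : Continuous g := by
    have : LipschitzWith (Real.toNNReal L) g := by
      apply LipschitzWith.of_dist_le_mul
      intro p q
      rw [dist_eq_norm, dist_eq_norm]
      calc ‖g p - g q‖ ≤ L * ‖p - q‖ := hlip p q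
        _ = (Real.toNNReal L) * ‖p - q‖ := by rw [Real.coe_toNNReal _ hL.le]
    exact this.continuous
  have hcont : Continuous h := by
    apply Continuous.inner
    · exact hgcont.comp (by continuity)
    · exact continuous_const
  have hsign : ∀ b ∈ Set.Icc (0:ℝ) 1, 0 ≤ (b - β) * h b := by
    intro b hb
    set w := v + b • (x - v) with hw
    have h1 : f w + ⟪g w, y - w⟫ + (μ / 2) * ‖y - w‖ ^ 2 ≤ f y := hsc w y
    have h2 : f y ≤ f w := hmin b hb
    have h3 : ⟪g w, y - w⟫ ≤ 0 := by nlinarith [sq_nonneg ‖y - w‖, norm_nonneg (y - w)]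
    have h4 : y - w = (β - b) • (x - v) := by rw [hy, hw]; module
    rw [h4, real_inner_smul_right] at h3
    nlinarith [h3]
  have hright : β < 1 → 0 ≤ h β := by
    intro hβ1
    have htend : Filter.Tendsto (fun m : ℕ => β + (1 - β) / (m + 1)) Filter.atTop (nhds β) := by
      have : Filter.Tendsto (fun m : ℕ => (1 - β) / (m + 1)) Filter.atTop (nhds 0) := by
        simpa [div_eq_mul_inv] using tendsto_one_div_add_atTop_nhds_zero_nat.const_mul (1 - β)
      simpa using (tendsto_const_nhds (x := β)).add this
    have htend2 : Filter.Tendsto (fun m : ℕ => h (β + (1 - β) / (m + 1))) Filter.atTop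
        (nhds (h β)) := (hcont.tendsto β).comp htend
    apply ge_of_tendsto htend2
    apply Filter.Eventually.of_forall
    intro m
    have hm1 : (0:ℝ) < (m : ℝ) + 1 := by positivity
    have hd : 0 < (1 - β) / (m + 1) := by
      apply div_pos (by linarith) hm1
    have hd2 : (1 - β) / (m + 1) ≤ 1 - β := by
      apply div_le_self (by linarith) (by linarith)
    have hmem : β + (1 - β) / (m + 1) ∈ Set.Icc (0:ℝ) 1 := by
      constructor <;> [linarith [hβ.1]; linarith]
    have := hsign _ hmem
    have hpos : 0 < (β + (1 - β) / (m + 1)) - β := by linarith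
    nlinarith [this]
  have hleft : 0 < β → h β ≤ 0 := by
    intro hβ0
    have htend : Filter.Tendsto (fun m : ℕ => β - β / (m + 1)) Filter.atTop (nhds β) := by
      have : Filter.Tendsto (fun m : ℕ => β / (m + 1)) Filter.atTop (nhds 0) := by
        simpa [div_eq_mul_inv] using tendsto_one_div_add_atTop_nhds_zero_nat.const_mul β
      simpa using (tendsto_const_nhds (x := β)).sub this
    have htend2 : Filter.Tendsto (fun m : ℕ => h (β - β / (m + 1))) Filter.atTop
        (nhds (h β)) := (hcont.tendsto β).comp htend
    apply le_of_tendsto htend2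
    apply Filter.Eventually.of_forall
    intro m
    have hm1 : (0:ℝ) < (m : ℝ) + 1 := by positivity
    have hd : 0 < β / (m + 1) := div_pos hβ0 hm1
    have hd2 : β / (m + 1) ≤ β := div_le_self hβ0.le (by linarith)
    have hmem : β - β / (m + 1) ∈ Set.Icc (0:ℝ) 1 := by
      constructor <;> [linarith; linarith [hβ.2]]
    have := hsign _ hmem
    have hneg : (β - β / (m + 1)) - β < 0 := by linarith
    nlinarith [this]
  have e1 : x - y = (1 - β) • (x - v) := by rw [hy]; module
  have e2 : v - y = (-β) • (x - v) := by rw [hy]; module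
  constructor
  · rw [e1, real_inner_smul_right]
    rcases lt_or_ge β 1 with h1 | h1
    · exact mul_nonneg (by linarith) (hright h1)
    · have : β = 1 := le_antisymm hβ.2 h1
      simp [this]
  · rw [e2, real_inner_smul_right]
    rcases lt_or_ge 0 β with h1 | h1
    · have := hleft h1
      nlinarith
    · have : β = 0 := le_antisymm (le_of_not_gt (by simpa using h1)) hβ.1
      simp [this]

theorem sqrt_gap (s s' sL am : ℝ) (hs' : 0 < s') (hle : s ≤ s') (hsL : 0 < sL)
    (h2 : s' / sL ≤ am) (hss : s' ^ 2 - s ^ 2 = am) : 1 / (2 * sL) ≤ s' - s := by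
  rw [div_le_iff₀ (by positivity)]
  have h2' : s' ≤ am * sL := by
    rw [div_le_iff₀ hsL] at h2
    exact h2
  nlinarith [h2', hss, mul_nonneg (mul_nonneg hsL.le (sub_nonneg.mpr hle)) (sub_nonneg.mpr hle),
    hs', hsL]

theorem sq_le_imp (q A' am : ℝ) (hA' : 0 ≤ A') (ha : 0 < am) (hq : 0 ≤ q)
    (hsq : (q * A') ^ 2 ≤ am ^ 2) : q * A' ≤ am := by
  nlinarith [mul_nonneg hq hA', ha]

end Aux

set_option maxHeartbeats 1000000 in
/-- (Theorem 5 of the paper.) AGMsDR for `μ`-strongly convex, `L`-smooth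
objectives: with `τ_k = 1 + μ A_k`, the strongly convex estimating sequence satisfies
`A k * f (x k) ≤ min ψ k = ψ k (v k)`, and
`A k ≥ max { k²/(4L), (1/L) (1 - √(μ/L))^{-(k-1)} }` for `k ≥ 1`. -/
theorem stmt_9 (n : ℕ) (L μ : ℝ) (hL : 0 < L) (hμ : 0 < μ)
    (f : EuclideanSpace ℝ (Fin n) → ℝ)
    (g : EuclideanSpace ℝ (Fin n) → EuclideanSpace ℝ (Fin n))
    (hdiff : ∀ z, HasGradientAt f (g z) z)
    (hlip : ∀ z w, ‖g z - g w‖ ≤ L * ‖z - w‖)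
    (hsc : ∀ z w, f z + ⟪g z, w - z⟫ + (μ / 2) * ‖w - z‖ ^ 2 ≤ f w)
    (x v y : ℕ → EuclideanSpace ℝ (Fin n)) (β a A τ : ℕ → ℝ)
    (ψ : ℕ → EuclideanSpace ℝ (Fin n) → ℝ)
    (hA0 : A 0 = 0) (hτ0 : τ 0 = 1) (hx0 : x 0 = v 0)
    (hψ0 : ∀ z, ψ 0 z = (1 / 2) * ‖z - x 0‖ ^ 2)
    (hβmem : ∀ k, β k ∈ Set.Icc (0 : ℝ) 1)
    (hβmin : ∀ k, ∀ b ∈ Set.Icc (0 : ℝ) 1,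
      f (v k + β k • (x k - v k)) ≤ f (v k + b • (x k - v k)))
    (hy : ∀ k, y k = v k + β k • (x k - v k))
    (hxk : ∀ k, x (k + 1) = y k - (1 / L) • g (y k))
    (hapos : ∀ k, 0 < a (k + 1))
    (ha : ∀ k, (a (k + 1)) ^ 2 / ((τ k + μ * a (k + 1)) * (A k + a (k + 1))) = 1 / L)
    (hAk : ∀ k, A (k + 1) = A k + a (k + 1))
    (hτk : ∀ k, τ (k + 1) = τ k + μ * a (k + 1))
    (hψk : ∀ k z, ψ (k + 1) z =
      ψ k z + a (k + 1) * (f (y k) + ⟪g (y k), z - y k⟫ + (μ / 2) * ‖z - y k‖ ^ 2))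
    (hv : ∀ k z, ψ (k + 1) (v (k + 1)) ≤ ψ (k + 1) z) :
    (∀ k, (A k * f (x k) ≤ ψ k (v k)) ∧ (∀ z, ψ k (v k) ≤ ψ k z)) ∧
    (∀ k : ℕ, 1 ≤ k →
      max ((k : ℝ) ^ 2 / (4 * L))
        ((1 / L) * ((1 - Real.sqrt (μ / L))⁻¹) ^ (k - 1)) ≤ A k) := by
  -- scalar invariants
  have hAnn : ∀ k, 0 ≤ A k := by
    intro k
    induction k with
    | zero => rw [hA0]
    | succ m ih => rw [hAk m]; linarith [hapos m]
  have hApos : ∀ k, 0 < A (k + 1) := by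
    intro k; rw [hAk k]; linarith [hapos k, hAnn k]
  have hτA : ∀ k, τ k = 1 + μ * A k := by
    intro k
    induction k with
    | zero => rw [hτ0, hA0]; ring
    | succ m ih => rw [hτk m, hAk m, ih]; ring
  have hτpos : ∀ k, 0 < τ k := by
    intro k; rw [hτA k]; nlinarith [hAnn k, hμ]
  have haa : ∀ k, a (k + 1) ^ 2 * L = τ (k + 1) * A (k + 1) := by
    intro k
    have h1 := ha k
    have hD : 0 < (τ k + μ * a (k + 1)) * (A k + a (k + 1)) := by
      rw [← hτk k, ← hAk k]; exact mul_pos (hτpos (k + 1)) (hApos k)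
    rw [div_eq_div_iff hD.ne' hL.ne'] at h1
    · rw [hτk k, hAk k]
      linarith [h1]
  -- minimality of ψ k at v k
  have hminψ : ∀ k z, ψ k (v k) ≤ ψ k z := by
    intro k
    cases k with
    | zero =>
      intro z
      rw [hψ0, hψ0, hx0]
      simp
      -- done by simp? keep positivity fallback

    | succ m => exact hv m
  -- quadratic structure
  have hqs : ∀ k, ∃ (b : EuclideanSpace ℝ (Fin n)) (c : ℝ),
      ∀ z, ψ k z = τ k / 2 * ‖z‖ ^ 2 + ⟪b, z⟫ + c := by
    intro k
    induction k with
    | zero =>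
      refine ⟨-(x 0), 1 / 2 * ‖x 0‖ ^ 2, fun z => ?_⟩
      rw [hψ0, hτ0, norm_sub_sq_real, inner_neg_left, real_inner_comm z (x 0)]
      ring
    | succ m ih =>
      obtain ⟨b, c, hbc⟩ := ih
      refine ⟨b + a (m + 1) • g (y m) - (a (m + 1) * μ) • y m,
        c + a (m + 1) * (f (y m) - ⟪g (y m), y m⟫ + μ / 2 * ‖y m‖ ^ 2), fun z => ?_⟩
      rw [hψk m z, hbc z, hτk m, norm_sub_sq_real, inner_sub_left, inner_add_left,
        real_inner_smul_left, real_inner_smul_left, inner_sub_right,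
        real_inner_comm z (y m), real_inner_comm (y m) z]
      ring
  have hexp : ∀ k z, ψ k z = ψ k (v k) + τ k / 2 * ‖z - v k‖ ^ 2 := by
    intro k z
    obtain ⟨b, c, hbc⟩ := hqs k
    exact quad_min_expand (τ k) (hτpos k) b c (ψ k) hbc (v k) (hminψ k) z
  -- Part 1 invariant
  have part1 : ∀ k, A k * f (x k) ≤ ψ k (v k) := by
    intro k
    induction k with
    | zero =>
      rw [hA0, hψ0, hx0]
      simp
    | succ m ih =>
      have key : ∀ z, A (m + 1) * f (x (m + 1)) ≤ ψ (m + 1) z := by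
        intro z
        have hopt := line_opt μ L hμ hL f g hlip hsc (v m) (x m) (β m) (hβmem m) (hβmin m)
        rw [← hy m] at hopt
        obtain ⟨o1, o2⟩ := hopt
        have f1 : f (y m) ≤ f (x m) := by
          have := hsc (y m) (x m)
          nlinarith [sq_nonneg ‖x m - y m‖, o1]
        have d1 : f (x (m + 1)) ≤ f (y m) - 1 / (2 * L) * ‖g (y m)‖ ^ 2 := by
          have hub := smooth_ub L hL f g hdiff hlip (y m) (x (m + 1))
          have hxy : x (m + 1) - y m = -((1 / L) • g (y m)) := by
            rw [hxk m]; abel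
          rw [hxy, inner_neg_right, real_inner_smul_right, real_inner_self_eq_norm_sq,
            norm_neg, norm_smul, Real.norm_eq_abs,
            abs_of_pos (show (0:ℝ) < 1/L by positivity)] at hub
          have he : f (y m) + -(1 / L * ‖g (y m)‖ ^ 2) + L / 2 * (1 / L * ‖g (y m)‖) ^ 2
              = f (y m) - 1 / (2 * L) * ‖g (y m)‖ ^ 2 := by
            field_simp
            ring
          linarith [hub, he]
        have q1 := qlb (τ m) (μ * a (m + 1)) (a (m + 1)) (hτpos m)
          (mul_nonneg hμ.le (hapos m).le) (hapos m).le (v m) (y m) z (g (y m)) o2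
        have hconst : a (m + 1) ^ 2 / (2 * (τ m + μ * a (m + 1)))
            = A (m + 1) / (2 * L) := by
          have h1 := haa m
          rw [hτk m] at h1
          rw [div_eq_div_iff (show (0:ℝ) < 2 * (τ m + μ * a (m + 1)) by
            nlinarith [hτpos m, hapos m, hμ]).ne' (show (0:ℝ) < 2 * L by positivity).ne']
          linear_combination 2 * h1
        rw [hconst] at q1
        have e1 : ψ (m + 1) z = ψ m z + a (m + 1) * (f (y m) + ⟪g (y m), z - y m⟫
            + μ / 2 * ‖z - y m‖ ^ 2) := hψk m z
        have e2 : ψ m z = ψ m (v m) + τ m / 2 * ‖z - v m‖ ^ 2 := hexp m z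
        have e3 : A m * f (y m) ≤ A m * f (x m) :=
          mul_le_mul_of_nonneg_left f1 (hAnn m)
        have e4 : A (m + 1) * f (x (m + 1)) ≤ A (m + 1) * (f (y m)
            - 1 / (2 * L) * ‖g (y m)‖ ^ 2) :=
          mul_le_mul_of_nonneg_left d1 (hApos m).le
        have eAfy : A (m + 1) * f (y m) = A m * f (y m) + a (m + 1) * f (y m) := by
          rw [hAk m]; ring
        have e5 : A (m + 1) * (1 / (2 * L) * ‖g (y m)‖ ^ 2)
            = A (m + 1) / (2 * L) * ‖g (y m)‖ ^ 2 := by ring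
        linarith [e1, e2, e3, e4, eAfy, ih, q1, e5]
      exact key (v (m + 1))
    -- Part 2: growth of A
  have ha1 := hapos 0
  have hLμ' : a 1 * (L - μ) = 1 := by
    have h1 := haa 0
    rw [hτA 1, hAk 0, hA0] at h1
    have h2 : a 1 * (a 1 * (L - μ) - 1) = 0 := by linear_combination h1
    rcases mul_eq_zero.mp h2 with h3 | h3
    · exact absurd h3 ha1.ne'
    · linarith
  have hLμ : μ < L := by nlinarith [ha1, hLμ']
  have hA1 : A 1 = a 1 := by rw [hAk 0, hA0]; ring
  have hA1L : 1 / L ≤ A 1 := by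
    rw [hA1, div_le_iff₀ hL]
    nlinarith [ha1, hLμ', hμ]
  set sL := Real.sqrt L with hsLdef
  have hsL : 0 < sL := Real.sqrt_pos.mpr hL
  have hsL2 : sL ^ 2 = L := Real.sq_sqrt hL.le
  -- square-root growth
  have hsq : ∀ k : ℕ, 1 ≤ k → (k : ℝ) / (2 * sL) ≤ Real.sqrt (A k) := by
    intro k hk
    induction k, hk using Nat.le_induction with
    | base =>
      have h2 : Real.sqrt (1 / L) ≤ Real.sqrt (A 1) := Real.sqrt_le_sqrt hA1L
      have h3 : Real.sqrt (1 / L) = 1 / sL := by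
        rw [one_div, Real.sqrt_inv, hsLdef, one_div]
      rw [h3] at h2
      have h4 : (1 : ℝ) / (2 * sL) ≤ 1 / sL := by
        apply div_le_div_of_nonneg_left one_pos.le hsL
        linarith
      push_cast
      linarith
    | succ m hm ih =>
      have hτ1 : 1 ≤ τ (m + 1) := by
        rw [hτA]; nlinarith [hAnn (m + 1), hμ]
      have h1 : A (m + 1) / L ≤ a (m + 1) ^ 2 := by
        rw [div_le_iff₀ hL]
        nlinarith [haa m, hτ1, hApos m]
      have h2 : Real.sqrt (A (m + 1)) / sL ≤ a (m + 1) := by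
        have h3 := Real.sqrt_le_sqrt h1
        rw [Real.sqrt_div (hApos m).le, Real.sqrt_sq (hapos m).le] at h3
        exact h3
      set s' := Real.sqrt (A (m + 1)) with hs'def
      set sm := Real.sqrt (A m) with hsmdef
      have hs'pos : 0 < s' := Real.sqrt_pos.mpr (hApos m)
      have hsmnn : 0 ≤ sm := Real.sqrt_nonneg _
      have hAm_le : A m ≤ A (m + 1) := by rw [hAk m]; linarith [hapos m]
      have hle : sm ≤ s' := Real.sqrt_le_sqrt hAm_le
      have hss : s' ^ 2 - sm ^ 2 = a (m + 1) := by
        rw [hs'def, hsmdef, Real.sq_sqrt (hAnn (m + 1)), Real.sq_sqrt (hAnn m), hAk m]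
        ring
      have key : 1 / (2 * sL) ≤ s' - sm :=
        sqrt_gap sm s' sL (a (m + 1)) hs'pos hle hsL h2 hss
      have ihm : (m : ℝ) / (2 * sL) ≤ sm := ih
      push_cast
      have hsplit : ((m : ℝ) + 1) / (2 * sL) = (m : ℝ) / (2 * sL) + 1 / (2 * sL) := by
        ring
      rw [hsplit]
      linarith
  have hquad : ∀ k : ℕ, 1 ≤ k → (k : ℝ) ^ 2 / (4 * L) ≤ A k := by
    intro k hk
    have h1 := hsq k hk
    have h2 : ((k : ℝ) / (2 * sL)) * ((k : ℝ) / (2 * sL))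
        ≤ Real.sqrt (A k) * Real.sqrt (A k) :=
      mul_le_mul h1 h1 (by positivity) (Real.sqrt_nonneg _)
    rw [Real.mul_self_sqrt (hAnn k)] at h2
    have h3 : ((k : ℝ) / (2 * sL)) * ((k : ℝ) / (2 * sL)) = (k : ℝ) ^ 2 / (4 * L) := by
      rw [← hsL2]
      field_simp
      ring
    linarith [h2, h3.symm.le]
  -- geometric growth
  set q := Real.sqrt (μ / L) with hqdef
  have hqnn : 0 ≤ q := Real.sqrt_nonneg _
  have hqq : q ^ 2 = μ / L := Real.sq_sqrt (by positivity)
  have hq1 : q < 1 := by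
    have h1 : q ^ 2 < 1 := by
      rw [hqq]
      exact (div_lt_one hL).mpr hLμ
    nlinarith [hqnn]
  have h1q : 0 < 1 - q := by linarith
  have hgstep : ∀ m : ℕ, A m ≤ A (m + 1) * (1 - q) := by
    intro m
    have hsq' : (q * A (m + 1)) ^ 2 ≤ a (m + 1) ^ 2 := by
      have h1 := haa m
      have h2 : τ (m + 1) = 1 + μ * A (m + 1) := hτA (m + 1)
      have h3 : q ^ 2 * L = μ := by
        rw [hqq]; field_simp
      have h4 : q ^ 2 * A (m + 1) ^ 2 * L = μ * A (m + 1) ^ 2 := by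
        linear_combination A (m + 1) ^ 2 * h3
      nlinarith [h1, h2, h4, hApos m, hL, hμ]
    have h1 : q * A (m + 1) ≤ a (m + 1) :=
      sq_le_imp q (A (m + 1)) (a (m + 1)) (hApos m).le (hapos m) hqnn hsq'
    have h2 : A (m + 1) * (1 - q) = A (m + 1) - q * A (m + 1) := by ring
    have hAm : A m = A (m + 1) - a (m + 1) := by rw [hAk m]; ring
    rw [h2]
    linarith [h1, hAm]
  have hgeo : ∀ k : ℕ, 1 ≤ k → (1 / L) * ((1 - q)⁻¹) ^ (k - 1) ≤ A k := by
    intro k hk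
    induction k, hk using Nat.le_induction with
    | base => simpa using hA1L
    | succ m hm ih =>
      have h2 : A m * (1 - q)⁻¹ ≤ A (m + 1) := by
        rw [← div_eq_mul_inv, div_le_iff₀ h1q]
        exact hgstep m
      have h3 : (1 / L) * ((1 - q)⁻¹) ^ (m - 1) * (1 - q)⁻¹ ≤ A m * (1 - q)⁻¹ :=
        mul_le_mul_of_nonneg_right ih (by positivity)
      have hexp2 : (m + 1) - 1 = (m - 1) + 1 := by omega
      rw [hexp2, pow_succ]
      calc (1 / L) * ((1 - q)⁻¹ ^ (m - 1) * (1 - q)⁻¹)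
          = (1 / L) * (1 - q)⁻¹ ^ (m - 1) * (1 - q)⁻¹ := by ring
        _ ≤ A m * (1 - q)⁻¹ := h3
        _ ≤ A (m + 1) := h2
  exact ⟨fun k => ⟨part1 k, hminψ k⟩, fun k hk => max_le (hquad k hk) (hgeo k hk)⟩
end

section
/- Let f: ℝ^n → ℝ be differentiable with ν-Hölder continuous gradient with constant M_ν for some ν ∈ [0,1], and let ε > 0. Suppose sequences (x^k), (v^k), (y^k), (a_k), (A_k), (ψ_k) are generated by the universal algorithm UAGMsDR: A_0 = 0, x^0 = v^0, ψ_0(x) = (1/2)‖x − x^0‖₂²; for each k: β_k minimizes β ↦ f(v^k + β(x^k − v^k)) over [0,1], y^k = v^k + β_k(x^k − v^k); x^{k+1} = y^k − h_{k+1}∇f(y^k) where h_{k+1} minimizes h ↦ f(y^k − h∇f(y^k)) over h ≥ 0; a_{k+1} > 0 solves f(y^k) − (a_{k+1}²/(2(A_k + a_{k+1})))‖∇f(y^k)‖₂² + ε a_{k+1}/(2(A_k + a_{k+1})) = f(x^{k+1}); A_{k+1} = A_k + a_{k+1}; ψ_{k+1}(x) = ψ_k(x) + a_{k+1}(f(y^k)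 + ⟨∇f(y^k), x − y^k⟩); v^{k+1} = argmin_x ψ_{k+1}(x). Then for all k: A_k f(x^k) ≤ min_{x∈ℝ^n} ψ_k(x) + A_k ε/2, and A_k ≥ [(1+ν)/(1−ν)]^{(1−ν)/(1+ν)} · k^{(1+3ν)/(1+ν)} ε^{(1−ν)/(1+ν)} / (2^{(1+3ν)/(1+ν)} M_ν^{2/(1+ν)}). -/
open scoped RealInnerProductSpace

variable {E : Type*} [NormedAddCommGroup E] [InnerProductSpace ℝ E] [CompleteSpace E]

lemma line_hasDerivAt (f : E → ℝ) (g : E → E) (hdiff : ∀ z, HasGradientAt f (g z) z)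
    (c d : E) (t : ℝ) :
    HasDerivAt (fun s : ℝ => f (c + s • d)) ⟪g (c + t • d), d⟫ t := by
  have h1 : HasFDerivAt f ((InnerProductSpace.toDual ℝ E) (g (c + t • d))) (c + t • d) :=
    (hasGradientAt_iff_hasFDerivAt).1 (hdiff _)
  have h2 : HasDerivAt (fun s : ℝ => c + s • d) d t := by
    simpa using ((hasDerivAt_id t).smul_const d).const_add c
  have h3 := h1.comp_hasDerivAt t h2
  simp only [InnerProductSpace.toDual_apply_apply] at h3
  exact h3

lemma holder_descent {ν Mν : ℝ} (hν : ν ∈ Set.Icc (0:ℝ) 1) (hMν : 0 ≤ Mν)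
    (f : E → ℝ) (g : E → E) (hdiff : ∀ z, HasGradientAt f (g z) z)
    (hhold : ∀ z w, ‖g z - g w‖ ≤ Mν * ‖z - w‖ ^ ν) (z w : E) :
    f w ≤ f z + ⟪g z, w - z⟫ + Mν / (1 + ν) * ‖w - z‖ ^ (1 + ν) := by
  obtain ⟨hν0, hν1⟩ := hν
  have h1ν : (0:ℝ) < 1 + ν := by linarith
  by_cases hwz : w = z
  · simp [hwz, Real.zero_rpow h1ν.ne']
  have hn : (0:ℝ) < ‖w - z‖ := by
    simpa [sub_eq_zero] using (norm_pos_iff.2 (sub_ne_zero.2 hwz))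
  set d := w - z with hd
  set φ : ℝ → ℝ := fun t => f (z + t • d) - t * ⟪g z, d⟫ -
      Mν / (1 + ν) * ‖d‖ ^ (1 + ν) * t ^ (1 + ν) with hφ
  have key : φ 1 ≤ φ 0 := by
    have hderiv : ∀ t ∈ Set.Ioo (0:ℝ) 1, HasDerivAt φ
        (⟪g (z + t • d) - g z, d⟫ -
          Mν / (1 + ν) * ‖d‖ ^ (1 + ν) * ((1 + ν) * t ^ ((1 + ν) - 1))) t := by
      intro t ht
      have h1 := line_hasDerivAt f g hdiff z d t
      have h2 : HasDerivAt (fun s : ℝ => s * ⟪g z, d⟫) ⟪g z, d⟫ t := by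
        simpa using (hasDerivAt_id t).mul_const (⟪g z, d⟫)
      have h3 : HasDerivAt (fun s : ℝ => s ^ (1 + ν)) ((1 + ν) * t ^ ((1 + ν) - 1)) t :=
        Real.hasDerivAt_rpow_const (Or.inl ht.1.ne')
      have := ((h1.sub h2).sub ((h3.const_mul (Mν / (1 + ν) * ‖d‖ ^ (1 + ν)))))
      rw [inner_sub_left]
      exact this
    have hcont : ContinuousOn φ (Set.Icc 0 1) := by
      have hf : Continuous f := by
        refine continuous_iff_continuousAt.2 fun z => ?_
        exact ((hasGradientAt_iff_hasFDerivAt).1 (hdiff z)).continuousAt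
      have : Continuous fun s : ℝ => f (z + s • d) :=
        hf.comp (by continuity)
      apply ContinuousOn.sub
      · exact (this.sub (continuous_id.mul continuous_const)).continuousOn
      · have : ContinuousOn (fun s : ℝ => s ^ (1 + ν)) (Set.Icc 0 1) := fun x _ =>
          (Real.continuousAt_rpow_const x (1 + ν) (Or.inr h1ν.le)).continuousWithinAt
        exact continuousOn_const.mul this
    have hanti : AntitoneOn φ (Set.Icc 0 1) := by
      apply antitoneOn_of_deriv_nonpos (convex_Icc 0 1) hcont
      · rw [interior_Icc]
        intro t ht
        exact (hderiv t ht).differentiableAt.differentiableWithinAt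
      · rw [interior_Icc]
        intro t ht
        rw [(hderiv t ht).deriv]
        have hb : ⟪g (z + t • d) - g z, d⟫ ≤ Mν * t ^ ν * ‖d‖ ^ (1 + ν) := by
          calc ⟪g (z + t • d) - g z, d⟫ ≤ ‖g (z + t • d) - g z‖ * ‖d‖ :=
                real_inner_le_norm _ _
            _ ≤ Mν * ‖(z + t • d) - z‖ ^ ν * ‖d‖ := by
                have := hhold (z + t • d) z
                exact mul_le_mul_of_nonneg_right this (norm_nonneg d)
            _ = Mν * t ^ ν * ‖d‖ ^ (1 + ν) := by
                have : ‖(z + t • d) - z‖ = t * ‖d‖ := by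
                  simp [norm_smul, abs_of_nonneg ht.1.le]
                rw [this, Real.mul_rpow ht.1.le (norm_nonneg d),
                  Real.rpow_add hn 1 ν, Real.rpow_one]
                ring
        have hc : Mν / (1 + ν) * ‖d‖ ^ (1 + ν) * ((1 + ν) * t ^ ((1 + ν) - 1))
            = Mν * t ^ ν * ‖d‖ ^ (1 + ν) := by
          have : (1 + ν) - 1 = ν := by ring
          rw [this]; field_simp
        rw [hc]; linarith
    have := hanti (Set.left_mem_Icc.2 zero_le_one) (Set.right_mem_Icc.2 zero_le_one)
      zero_le_one
    exact this
  have h0 : φ 0 = f z := by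
    simp [hφ, Real.zero_rpow h1ν.ne']
  have h1 : φ 1 = f w - ⟪g z, d⟫ - Mν / (1 + ν) * ‖d‖ ^ (1 + ν) := by
    simp [hφ, Real.one_rpow, hd]
  rw [h0, h1] at key
  linarith

lemma bernoulli_rpow {x y p : ℝ} (hx : 0 ≤ x) (hy : 0 < y) (hp : 1 ≤ p) :
    y ^ p + p * y ^ (p - 1) * (x - y) ≤ x ^ p := by
  have hs : (-1 : ℝ) ≤ x / y - 1 := by
    have : 0 ≤ x / y := div_nonneg hx hy.le
    linarith
  have h := one_add_mul_self_le_rpow_one_add hs hp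
  have h2 : (1 : ℝ) + (x / y - 1) = x / y := by ring
  rw [h2] at h
  have h3 : (x / y) ^ p = x ^ p / y ^ p := Real.div_rpow hx hy.le p
  rw [h3] at h
  have hyp : (0:ℝ) < y ^ p := Real.rpow_pos_of_pos hy p
  have h4 := mul_le_mul_of_nonneg_right h hyp.le
  rw [div_mul_cancel₀ _ hyp.ne'] at h4
  calc y ^ p + p * y ^ (p - 1) * (x - y)
      = (1 + p * (x / y - 1)) * y ^ p := by
        rw [Real.rpow_sub hy, Real.rpow_one]
        field_simp
    _ ≤ x ^ p := h4

lemma young_holder {ν M δ u : ℝ} (hν0 : 0 ≤ ν) (hν1 : ν ≤ 1) (hM : 0 < M) (hδ : 0 < δ)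
    (hu : 0 ≤ u) :
    M / (1 + ν) * u ^ (1 + ν) ≤
      ((1 - ν) / ((1 + ν) * δ)) ^ ((1 - ν) / (1 + ν)) * M ^ (2 / (1 + ν)) * u ^ (2:ℝ) / 2
        + δ / 2 := by
  have h1ν : (0:ℝ) < 1 + ν := by linarith
  rcases eq_or_lt_of_le hν1 with hν1' | hν1'
  · -- ν = 1
    subst hν1'
    norm_num
    nlinarith [hδ]
  · -- ν < 1
    set w1 : ℝ := (1 + ν) / 2 with hw1
    set w2 : ℝ := (1 - ν) / 2 with hw2
    have hw1pos : 0 < w1 := by positivity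
    have hw2pos : 0 < w2 := by rw [hw2]; linarith
    set B : ℝ := (1 - ν) / ((1 + ν) * δ) with hB
    have hBpos : 0 < B := by
      apply div_pos (by linarith) (by positivity)
    set L : ℝ := B ^ ((1 - ν) / (1 + ν)) * M ^ (2 / (1 + ν)) with hL
    have hLpos : 0 < L := by positivity
    set p1 : ℝ := L * u ^ (2:ℝ) / (1 + ν) with hp1
    set p2 : ℝ := δ / (1 - ν) with hp2
    have hp1nn : 0 ≤ p1 := by positivity
    have hp2nn : 0 ≤ p2 := le_of_lt (div_pos hδ (by linarith))
    have hsum : w1 + w2 = 1 := by rw [hw1, hw2]; ring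
    have key := Real.geom_mean_le_arith_mean2_weighted hw1pos.le hw2pos.le hp1nn hp2nn hsum
    -- compute p1 ^ w1 * p2 ^ w2 = M / (1 + ν) * u ^ (1 + ν)
    have hc : p1 ^ w1 * p2 ^ w2 = M / (1 + ν) * u ^ (1 + ν) := by
      have e1 : p1 ^ w1 = L ^ w1 * (u ^ (2:ℝ)) ^ w1 / (1 + ν) ^ w1 := by
        rw [hp1, Real.div_rpow (by positivity) h1ν.le, Real.mul_rpow hLpos.le (by positivity)]
      have e2 : (u ^ (2:ℝ)) ^ w1 = u ^ (1 + ν) := by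
        rw [← Real.rpow_mul hu]
        congr 1
        rw [hw1]; ring
      have e3 : L ^ w1 = B ^ w2 * M := by
        rw [hL, Real.mul_rpow (by positivity) (by positivity),
          ← Real.rpow_mul hBpos.le, ← Real.rpow_mul hM.le]
        congr 1
        · congr 1
          rw [hw2, hw1]; field_simp
        · rw [show 2 / (1 + ν) * w1 = 1 by rw [hw1]; field_simp]
          exact Real.rpow_one M
      have e4 : B ^ w2 * p2 ^ w2 = ((1 + ν)⁻¹ : ℝ) ^ w2 := by
        rw [← Real.mul_rpow hBpos.le hp2nn]
        congr 1
        rw [hB, hp2]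
        have h1mν : (1 - ν) ≠ 0 := by linarith
        field_simp
      have e5 : ((1 + ν)⁻¹ : ℝ) ^ w2 = (((1 + ν):ℝ) ^ w2)⁻¹ := Real.inv_rpow h1ν.le w2
      have e45 : B ^ w2 * p2 ^ w2 = (((1 + ν):ℝ) ^ w2)⁻¹ := by rw [e4, e5]
      have e6 : ((1 + ν):ℝ) ^ w2 * ((1 + ν):ℝ) ^ w1 = 1 + ν := by
        rw [← Real.rpow_add h1ν]
        rw [show w2 + w1 = 1 by linarith [hsum]]
        exact Real.rpow_one _
      rw [e1, e2, e3]
      calc B ^ w2 * M * u ^ (1 + ν) / (1 + ν) ^ w1 * p2 ^ w2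
          = M * u ^ (1 + ν) * (B ^ w2 * p2 ^ w2) / (1 + ν) ^ w1 := by ring
        _ = M * u ^ (1 + ν) / ((((1 + ν):ℝ) ^ w2) * (((1 + ν):ℝ) ^ w1)) := by
            rw [e45]; ring
        _ = M / (1 + ν) * u ^ (1 + ν) := by rw [e6]; ring
    rw [hc] at key
    calc M / (1 + ν) * u ^ (1 + ν) ≤ w1 * p1 + w2 * p2 := key
      _ = L * u ^ (2:ℝ) / 2 + δ / 2 := by
          have hwp1 : ∀ X : ℝ, w1 * (X / (1 + ν)) = X / 2 := by
            intro X; rw [hw1]; field_simp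
          have hwp2 : w2 * p2 = δ / 2 := by
            rw [hw2, hp2]
            have h1mν : (1 - ν) ≠ 0 := by linarith
            field_simp
          rw [hp1, hwp1, hwp2]


set_option maxHeartbeats 1000000 in
lemma key_recurrence {ν M ε s aa Ak : ℝ} (hν0 : 0 ≤ ν) (hν1 : ν ≤ 1) (hM : 0 < M)
    (hε : 0 < ε) (hs : 0 < s) (haa : 0 < aa) (hAk : 0 ≤ Ak)
    (hineq : ∀ t : ℝ, 0 ≤ t →
      t * s ^ 2 - M / (1 + ν) * (t * s) ^ (1 + ν) ≤
        aa ^ 2 * s ^ 2 / (2 * (Ak + aa)) - ε * aa / (2 * (Ak + aa))) :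
    ((1 + ν) / (1 - ν)) ^ ((1 - ν) / (1 + ν)) / M ^ (2 / (1 + ν)) *
        ε ^ ((1 - ν) / (1 + ν)) * (Ak + aa) ^ (1 - (1 - ν) / (1 + ν))
      ≤ aa ^ (2 - (1 - ν) / (1 + ν)) := by
  have h1ν : (0:ℝ) < 1 + ν := by linarith
  set θ : ℝ := (1 - ν) / (1 + ν) with hθ
  have hθ0 : 0 ≤ θ := div_nonneg (by linarith) (by linarith)
  have hAp : 0 < Ak + aa := by linarith
  set Ap : ℝ := Ak + aa with hApdef
  set δ : ℝ := ε * aa / Ap with hδdef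
  have hδ : 0 < δ := by positivity
  set q : ℝ := 2 / (1 + ν) with hq
  set B : ℝ := (1 - ν) / ((1 + ν) * δ) with hB
  have hBnn : 0 ≤ B := by
    apply div_nonneg (by linarith) (by positivity)
  have hBθpos : 0 < B ^ θ := by
    rcases eq_or_lt_of_le hν1 with hh | hh
    · have : θ = 0 := by rw [hθ, ← hh]; norm_num
      rw [this, Real.rpow_zero]; norm_num
    · exact Real.rpow_pos_of_pos (div_pos (by linarith) (by positivity)) θ
    -- set L
  set L : ℝ := B ^ θ * M ^ q with hL
  have hLpos : 0 < L := by positivity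
  have ht0 : (0:ℝ) ≤ 1 / L := by positivity
  have hyoung := young_holder hν0 hν1 hM hδ (mul_nonneg ht0 hs.le)
  have hq1 := hineq (1 / L) ht0
  -- t s² − (L (ts)²/2 + δ/2) with t = 1/L equals s²/(2L) − δ/2
  have hts : (1 / L) * s ^ 2 - (L * ((1 / L) * s) ^ (2:ℝ) / 2 + δ / 2)
      = s ^ 2 / (2 * L) - δ / 2 := by
    rw [Real.rpow_two]
    field_simp
    ring
  have hcomb : s ^ 2 / (2 * L) - δ / 2 ≤ aa ^ 2 * s ^ 2 / (2 * Ap) - δ / 2 := by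
    have hδ2 : ε * aa / (2 * Ap) = δ / 2 := by
      rw [hδdef]; field_simp
    have := hyoung
    rw [hL] at this ⊢
    nlinarith [hq1, hδ2, hts]
  have hkey1 : Ap ≤ aa ^ 2 * L := by
    have h8 : s ^ 2 / (2 * L) ≤ aa ^ 2 * s ^ 2 / (2 * Ap) := by linarith
    rw [div_le_div_iff₀ (by positivity) (by positivity)] at h8
    have hs2 : (0:ℝ) < s ^ 2 := by positivity
    nlinarith [h8, hs2, mul_pos hLpos hAp]
  -- convert to rpow form
  set P : ℝ := ((1 + ν) / (1 - ν)) ^ θ with hP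
  have hPnn : 0 ≤ P := Real.rpow_nonneg (div_nonneg (by linarith) (by linarith)) θ
  have hMq : 0 < M ^ q := Real.rpow_pos_of_pos hM q
  have hεθ : 0 < ε ^ θ := Real.rpow_pos_of_pos hε θ
  have haaθ : 0 < aa ^ θ := Real.rpow_pos_of_pos haa θ
  have hApθ : 0 < Ap ^ θ := Real.rpow_pos_of_pos hAp θ
  -- P * ε^θ * aa^θ * B^θ = Ap^θ
  have hPB : P * ε ^ θ * aa ^ θ * B ^ θ = Ap ^ θ := by
    rcases eq_or_lt_of_le hν1 with hh | hh
    · have hθz : θ = 0 := by rw [hθ, ← hh]; norm_num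
      rw [hP, hθz]
      simp
    · have h1mν : (0:ℝ) < 1 - ν := by linarith
      have e1 : (0:ℝ) ≤ (1 + ν) / (1 - ν) := le_of_lt (div_pos h1ν h1mν)
      rw [hP, ← Real.mul_rpow e1 hε.le, ← Real.mul_rpow (mul_nonneg e1 hε.le) haa.le,
        ← Real.mul_rpow (mul_nonneg (mul_nonneg e1 hε.le) haa.le) hBnn]
      congr 1
      rw [hB, hδdef]
      field_simp
  -- main chain
  have hmain : P * ε ^ θ * Ap * aa ^ θ ≤ aa ^ 2 * Ap ^ θ * M ^ q := by
    have h9 : Ap * (P * ε ^ θ * aa ^ θ) ≤ aa ^ 2 * L * (P * ε ^ θ * aa ^ θ) :=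
      mul_le_mul_of_nonneg_right hkey1 (by positivity)
    have h10 : aa ^ 2 * L * (P * ε ^ θ * aa ^ θ) = aa ^ 2 * Ap ^ θ * M ^ q := by
      rw [hL, ← hPB]; ring
    rw [h10] at h9
    linarith [h9]
  have lhs_eq : P / M ^ q * ε ^ θ * Ap ^ (1 - θ) = (P * ε ^ θ * Ap) / (M ^ q * Ap ^ θ) := by
    rw [Real.rpow_sub hAp, Real.rpow_one]
    field_simp
  have rhs_eq : aa ^ ((2:ℝ) - θ) = aa ^ 2 / aa ^ θ := by
    rw [Real.rpow_sub haa, Real.rpow_two]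
  rw [lhs_eq, rhs_eq, div_le_div_iff₀ (by positivity) (by positivity)]
  nlinarith [hmain]


lemma growth_step {p D Ak Ap aa : ℝ} (hp1 : 1 ≤ p) (hp2 : p ≤ 2) (hD : 0 < D)
    (hAk : 0 ≤ Ak) (haa : 0 < aa) (hsum : Ap = Ak + aa)
    (hrec : D ^ p * Ap ^ (p - 1) ≤ aa ^ p) :
    Ak ^ (1 / p) + D / 2 ≤ Ap ^ (1 / p) := by
  have hppos : (0:ℝ) < p := by linarith
  have hAp : 0 < Ap := by rw [hsum]; linarith
  set u0 : ℝ := Ak ^ (1 / p) with hu0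
  set u1 : ℝ := Ap ^ (1 / p) with hu1
  have hu0nn : 0 ≤ u0 := Real.rpow_nonneg hAk _
  have hu1pos : 0 < u1 := Real.rpow_pos_of_pos hAp _
  have hu0p : u0 ^ p = Ak := by
    rw [hu0, ← Real.rpow_mul hAk, one_div, inv_mul_cancel₀ hppos.ne', Real.rpow_one]
  have hu1p : u1 ^ p = Ap := by
    rw [hu1, ← Real.rpow_mul hAp.le, one_div, inv_mul_cancel₀ hppos.ne', Real.rpow_one]
  have hu1pm : u1 ^ (p - 1) = Ap ^ ((p - 1) / p) := by
    rw [hu1, ← Real.rpow_mul hAp.le]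
    congr 1
    field_simp
  have hu1pmpos : 0 < u1 ^ (p - 1) := Real.rpow_pos_of_pos hu1pos _
  -- Bernoulli: aa ≤ p * u1^(p-1) * (u1 - u0)
  have hbern := bernoulli_rpow hu0nn hu1pos hp1
  rw [hu0p, hu1p] at hbern
  have haux : aa ≤ p * u1 ^ (p - 1) * (u1 - u0) := by nlinarith [hbern]
  -- lower bound on aa: D * u1^(p-1) ≤ aa
  have hlow : D * u1 ^ (p - 1) ≤ aa := by
    have h1 : (D * u1 ^ (p - 1)) ^ p = D ^ p * Ap ^ (p - 1) := by
      rw [Real.mul_rpow hD.le hu1pmpos.le, hu1pm, ← Real.rpow_mul hAp.le,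
        div_mul_cancel₀ _ hppos.ne']
    have h2 : (D * u1 ^ (p - 1)) ^ p ≤ aa ^ p := by rw [h1]; exact hrec
    exact (Real.rpow_le_rpow_iff (by positivity) haa.le hppos).1 h2
  have hfinal : D ≤ p * (u1 - u0) := by
    have := hlow.trans haux
    have h3 : D * u1 ^ (p - 1) ≤ (p * (u1 - u0)) * u1 ^ (p - 1) := by nlinarith [this]
    exact le_of_mul_le_mul_right (by linarith [h3]) hu1pmpos
  have : D / 2 ≤ u1 - u0 := by
    rcases le_or_gt u1 u0 with hc | hc
    · nlinarith
    · nlinarith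
  linarith


set_option maxHeartbeats 1600000

/-- (Theorem 8 of the paper.) The universal method UAGMsDR applied to a
(possibly non-convex) `f` with `ν`-Hölder continuous gradient satisfies
`A k * f (x k) ≤ min ψ k + A k ε / 2` and
`A k ≥ ((1+ν)/(1-ν))^{(1-ν)/(1+ν)} k^{(1+3ν)/(1+ν)} ε^{(1-ν)/(1+ν)} /
  (2^{(1+3ν)/(1+ν)} M_ν^{2/(1+ν)})`. -/
theorem stmt_14 (n : ℕ) (ν Mν ε : ℝ) (hν : ν ∈ Set.Icc (0 : ℝ) 1) (hMν : 0 ≤ Mν)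
    (hε : 0 < ε)
    (f : EuclideanSpace ℝ (Fin n) → ℝ)
    (g : EuclideanSpace ℝ (Fin n) → EuclideanSpace ℝ (Fin n))
    (hdiff : ∀ z, HasGradientAt f (g z) z)
    (hhold : ∀ z w, ‖g z - g w‖ ≤ Mν * ‖z - w‖ ^ ν)
    (x v y : ℕ → EuclideanSpace ℝ (Fin n)) (β a A h : ℕ → ℝ)
    (ψ : ℕ → EuclideanSpace ℝ (Fin n) → ℝ)
    (hA0 : A 0 = 0) (hx0 : x 0 = v 0)
    (hψ0 : ∀ z, ψ 0 z = (1 / 2) * ‖z - x 0‖ ^ 2)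
    (hβmem : ∀ k, β k ∈ Set.Icc (0 : ℝ) 1)
    (hβmin : ∀ k, ∀ b ∈ Set.Icc (0 : ℝ) 1,
      f (v k + β k • (x k - v k)) ≤ f (v k + b • (x k - v k)))
    (hy : ∀ k, y k = v k + β k • (x k - v k))
    (hh : ∀ k, 0 ≤ h (k + 1))
    (hhmin : ∀ k, ∀ t : ℝ, 0 ≤ t →
      f (y k - h (k + 1) • g (y k)) ≤ f (y k - t • g (y k)))
    (hxk : ∀ k, x (k + 1) = y k - h (k + 1) • g (y k))
    (hapos : ∀ k, 0 < a (k + 1))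
    (ha : ∀ k, f (y k) - (a (k + 1)) ^ 2 / (2 * (A k + a (k + 1))) * ‖g (y k)‖ ^ 2 +
      ε * a (k + 1) / (2 * (A k + a (k + 1))) = f (x (k + 1)))
    (hAk : ∀ k, A (k + 1) = A k + a (k + 1))
    (hψk : ∀ k z, ψ (k + 1) z = ψ k z + a (k + 1) * (f (y k) + ⟪g (y k), z - y k⟫))
    (hv : ∀ k z, ψ (k + 1) (v (k + 1)) ≤ ψ (k + 1) z) :
    ∀ k : ℕ, (A k * f (x k) ≤ ψ k (v k) + A k * ε / 2) ∧
      (∀ z, ψ k (v k) ≤ ψ k z) ∧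
      ((1 + ν) / (1 - ν)) ^ ((1 - ν) / (1 + ν)) *
          (k : ℝ) ^ ((1 + 3 * ν) / (1 + ν)) * ε ^ ((1 - ν) / (1 + ν)) /
          ((2 : ℝ) ^ ((1 + 3 * ν) / (1 + ν)) * Mν ^ (2 / (1 + ν))) ≤ A k := by
  obtain ⟨hν0, hν1⟩ := hν
  have h1ν : (0:ℝ) < 1 + ν := by linarith
  -- f (y k) ≤ f (x k)
  have hfyx : ∀ k, f (y k) ≤ f (x k) := by
    intro k
    have h1 := hβmin k 1 ⟨zero_le_one, le_refl 1⟩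
    rw [hy k]
    simpa using h1
  -- A is nonnegative
  have hAnn : ∀ k, 0 ≤ A k := by
    intro k
    induction k with
    | zero => rw [hA0]
    | succ k ih => rw [hAk k]; linarith [hapos k]
  have hApos : ∀ k, 0 < A k + a (k + 1) := by
    intro k; linarith [hapos k, hAnn k]
  -- gradient at y k is nonzero
  have hgpos : ∀ k, 0 < ‖g (y k)‖ := by
    intro k
    rcases eq_or_lt_of_le (norm_nonneg (g (y k))) with hg | hg
    · exfalso
      have hgz : g (y k) = 0 := by rw [← norm_eq_zero]; exact hg.symm
      have hx1 : x (k + 1) = y k := by rw [hxk k, hgz]; simp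
      have h1 := ha k
      rw [hgz, hx1, norm_zero] at h1
      have h2 : 0 < ε * a (k + 1) / (2 * (A k + a (k + 1))) :=
        div_pos (mul_pos hε (hapos k)) (by linarith [hApos k])
      have h3 : ε * a (k + 1) / (2 * (A k + a (k + 1))) = 0 := by linarith [h1]
      linarith
    · exact hg
  -- directional optimality of the line search in β
  have hgv : ∀ k, 0 ≤ ⟪g (y k), v k - y k⟫ := by
    intro k
    have hloc : IsLocalMinOn (fun b : ℝ => f (v k + b • (x k - v k)))
        (Set.Icc (0:ℝ) 1) (β k) :=
      eventually_nhdsWithin_of_forall (fun b hb => hβmin k b hb)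
    have hder : HasDerivAt (fun b : ℝ => f (v k + b • (x k - v k)))
        ⟪g (y k), x k - v k⟫ (β k) := by
      have := line_hasDerivAt f g hdiff (v k) (x k - v k) (β k)
      rwa [← hy k] at this
    have htan : (0:ℝ) - β k ∈ posTangentConeAt (Set.Icc (0:ℝ) 1) (β k) := by
      apply sub_mem_posTangentConeAt_of_segment_subset
      exact (convex_Icc (0:ℝ) 1).segment_subset (hβmem k)
        (Set.left_mem_Icc.2 zero_le_one)
    have h0 := hloc.hasFDerivWithinAt_nonneg hder.hasFDerivAt.hasFDerivWithinAt htan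
    simp only [ContinuousLinearMap.toSpanSingleton_apply, ContinuousLinearMap.one_apply,
      smul_eq_mul] at h0
    have hvy : v k - y k = (-(β k)) • (x k - v k) := by
      rw [hy k, neg_smul]; abel
    rw [hvy, real_inner_smul_right]
    nlinarith [h0]
  -- the main invariant by induction
  have main : ∀ k, (∀ z, ψ k z = ψ k (v k) + (1/2) * ‖z - v k‖^2) ∧
      (A k * f (x k) ≤ ψ k (v k) + A k * ε / 2) := by
    intro k
    induction k with
    | zero =>
      constructor
      · intro z
        rw [hψ0 z, hψ0 (v 0), hx0]
        simp
      · rw [hA0, hψ0 (v 0), hx0]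
        simp
    | succ k ih =>
      obtain ⟨ihq, ih1⟩ := ih
      set w : EuclideanSpace ℝ (Fin n) := v k - a (k+1) • g (y k) with hw
      have hwv : w - v k = (-(a (k+1))) • g (y k) := by
        rw [hw, neg_smul]; abel
      -- quadratic form of ψ (k+1) around w
      have hq2 : ∀ z, ψ (k+1) z = ψ (k+1) w + (1/2) * ‖z - w‖^2 := by
        intro z
        rw [hψk k z, hψk k w, ihq z, ihq w]
        have e1 : ‖z - v k‖^2 = ‖z - w‖^2 + 2*⟪z - w, w - v k⟫ + ‖w - v k‖^2 := by
          rw [show z - v k = (z - w) + (w - v k) by abel, norm_add_sq_real]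
        have e2 : ⟪g (y k), z - y k⟫ = ⟪g (y k), z - w⟫ + ⟪g (y k), w - y k⟫ := by
          rw [← inner_add_right, sub_add_sub_cancel]
        have e3 : ⟪z - w, w - v k⟫ = -(a (k+1) * ⟪g (y k), z - w⟫) := by
          rw [hwv, real_inner_smul_right, real_inner_comm]; ring
        rw [e1, e2, e3]
        ring
      -- v (k+1) = w
      have hvw : v (k+1) = w := by
        have h1 := hv k w
        have h2 := hq2 (v (k+1))
        have h3 : ‖v (k+1) - w‖^2 ≤ 0 := by linarith
        have h4 : ‖v (k+1) - w‖^2 = 0 := le_antisymm h3 (by positivity)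
        have h5 : v (k+1) - w = 0 := by
          rw [← norm_eq_zero]
          exact pow_eq_zero_iff (two_ne_zero) |>.1 h4
        rw [← sub_eq_zero]; exact h5
      have hinv : ∀ z, ψ (k+1) z = ψ (k+1) (v (k+1)) + (1/2) * ‖z - v (k+1)‖^2 := by
        intro z; rw [hvw]; exact hq2 z
      refine ⟨hinv, ?_⟩
      -- value of ψ (k+1) at its minimizer
      have e4 : ‖w - v k‖^2 = a (k+1)^2 * ‖g (y k)‖^2 := by
        rw [hwv]
        simp [norm_smul, mul_pow, sq_abs]
      have e5 : ⟪g (y k), w - y k⟫ = ⟪g (y k), v k - y k⟫ - a (k+1) * ‖g (y k)‖^2 := by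
        rw [show w - y k = (v k - y k) + (-(a (k+1))) • g (y k) by rw [hw, neg_smul]; abel,
          inner_add_right, real_inner_smul_right, real_inner_self_eq_norm_sq]
        ring
      have hval : ψ (k+1) (v (k+1)) = ψ k (v k) + a (k+1) * f (y k)
          + a (k+1) * ⟪g (y k), v k - y k⟫ - a (k+1)^2 * ‖g (y k)‖^2 / 2 := by
        rw [hvw, hψk k w, ihq w, e4, e5]
        ring
      -- multiply the defining equation of a (k+1) by A k + a (k+1)
      have hEq : (A k + a (k+1)) * f (x (k+1)) = (A k + a (k+1)) * f (y k)
          - a (k+1)^2 * ‖g (y k)‖^2 / 2 + ε * a (k+1) / 2 := by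
        rw [← ha k]
        have h2 : A k + a (k+1) ≠ 0 := (hApos k).ne'
        field_simp
      have hAf : A k * f (y k) ≤ A k * f (x k) :=
        mul_le_mul_of_nonneg_left (hfyx k) (hAnn k)
      rw [hAk k, hval]
      have hag : 0 ≤ a (k+1) * ⟪g (y k), v k - y k⟫ :=
        mul_nonneg (hapos k).le (hgv k)
      linarith [ih1, hAf, hEq, hag]
  -- conclusion parts 1 and 2
  intro k
  refine ⟨(main k).2, ?_, ?_⟩
  · intro z
    have h1 := (main k).1 z
    have h2 : (0:ℝ) ≤ (1/2) * ‖z - v k‖^2 := by positivity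
    linarith
  -- part 3
  · rcases eq_or_lt_of_le hMν with hM0 | hMpos
    · have hq0 : Mν ^ (2 / (1 + ν)) = 0 := by
        rw [← hM0]
        exact Real.zero_rpow (by positivity : (2:ℝ) / (1 + ν) ≠ 0)
      rw [hq0, mul_zero, div_zero]
      exact hAnn k
    · -- the descent/line-search inequality
      have hstep : ∀ j, ∀ t : ℝ, 0 ≤ t →
          t * ‖g (y j)‖^2 - Mν/(1+ν) * (t * ‖g (y j)‖)^(1+ν) ≤
            a (j+1)^2 * ‖g (y j)‖^2 / (2*(A j + a (j+1)))
              - ε * a (j+1) / (2*(A j + a (j+1))) := by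
        intro j t ht
        have hd := holder_descent ⟨hν0, hν1⟩ hMν f g hdiff hhold (y j)
          (y j - t • g (y j))
        have hyy : (y j - t • g (y j)) - y j = -(t • g (y j)) := by abel
        have hnorm : ‖(y j - t • g (y j)) - y j‖ = t * ‖g (y j)‖ := by
          rw [hyy, norm_neg, norm_smul, Real.norm_eq_abs, abs_of_nonneg ht]
        have hin : ⟪g (y j), (y j - t • g (y j)) - y j⟫ = -(t * ‖g (y j)‖^2) := by
          rw [hyy, inner_neg_right, real_inner_smul_right, real_inner_self_eq_norm_sq]
        have hls : f (x (j+1)) ≤ f (y j - t • g (y j)) := by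
          rw [hxk j]; exact hhmin j t ht
        rw [hnorm, hin] at hd
        have hfy := ha j
        have hc1 : t * ‖g (y j)‖^2 - Mν/(1+ν) * (t * ‖g (y j)‖)^(1+ν) ≤
            f (y j) - f (x (j+1)) := by linarith [hd, hls]
        have hc2 : f (y j) - f (x (j+1)) =
            a (j+1)^2 / (2*(A j + a (j+1))) * ‖g (y j)‖^2
              - ε * a (j+1) / (2*(A j + a (j+1))) := by linarith [hfy]
        have hc3 : a (j+1)^2 / (2*(A j + a (j+1))) * ‖g (y j)‖^2 =
            a (j+1)^2 * ‖g (y j)‖^2 / (2*(A j + a (j+1))) := by ring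
        linarith [hc1, hc2, hc3]
      set θ : ℝ := (1 - ν) / (1 + ν) with hθdef
      have hθ0 : 0 ≤ θ := div_nonneg (by linarith) (by linarith)
      have hθ1 : θ ≤ 1 := by
        rw [hθdef, div_le_one h1ν]; linarith
      set p : ℝ := 2 - θ with hpdef
      have hp1 : 1 ≤ p := by rw [hpdef]; linarith
      have hp2 : p ≤ 2 := by rw [hpdef]; linarith
      have hppos : 0 < p := by linarith
      set q : ℝ := 2 / (1 + ν) with hqdef
      set P : ℝ := ((1 + ν) / (1 - ν)) ^ θ with hPdef
      have hPpos : 0 < P := by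
        rcases eq_or_lt_of_le hν1 with hh | hh
        · have : θ = 0 := by rw [hθdef, ← hh]; norm_num
          rw [hPdef, this, Real.rpow_zero]; norm_num
        · exact Real.rpow_pos_of_pos (div_pos h1ν (by linarith)) θ
      have hMq : 0 < Mν ^ q := Real.rpow_pos_of_pos hMpos q
      set Dq : ℝ := P / Mν ^ q * ε ^ θ with hDqdef
      have hDqpos : 0 < Dq := by
        apply mul_pos (div_pos hPpos hMq) (Real.rpow_pos_of_pos hε θ)
      set D : ℝ := Dq ^ (1/p) with hDdef
      have hDpos : 0 < D := Real.rpow_pos_of_pos hDqpos _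
      have hDp : D ^ p = Dq := by
        rw [hDdef, ← Real.rpow_mul hDqpos.le, one_div, inv_mul_cancel₀ hppos.ne',
          Real.rpow_one]
      -- by induction: D k / 2 ≤ A k ^ (1/p)
      have hu : ∀ j : ℕ, D * j / 2 ≤ (A j) ^ (1/p) := by
        intro j
        induction j with
        | zero =>
          rw [hA0, Real.zero_rpow (one_div_ne_zero hppos.ne')]
          simp
        | succ j ih =>
          have hrec0 := key_recurrence hν0 hν1 hMpos hε (hgpos j) (hapos j) (hAnn j)
            (hstep j)
          have hrec : D ^ p * (A (j+1)) ^ (p - 1) ≤ (a (j+1)) ^ p := by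
            rw [hDp, hAk j, hpdef]
            have h1 : 2 - θ - 1 = 1 - θ := by ring
            rw [h1]
            exact hrec0
          have hgs := growth_step hp1 hp2 hDpos (hAnn j) (hapos j) (hAk j) hrec
          push_cast
          calc D * ((j:ℝ)+1)/2 = D * j/2 + D/2 := by ring
            _ ≤ (A j)^(1/p) + D/2 := by linarith [ih]
            _ ≤ (A (j+1))^(1/p) := hgs
      have h1 := hu k
      have h2 : (D * k / 2) ^ p ≤ ((A k)^(1/p))^p :=
        Real.rpow_le_rpow (by positivity) h1 hppos.le
      have h3 : ((A k)^(1/p))^p = A k := by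
        rw [← Real.rpow_mul (hAnn k), one_div, inv_mul_cancel₀ hppos.ne', Real.rpow_one]
      rw [h3] at h2
      have hep : (1 + 3 * ν) / (1 + ν) = p := by
        rw [hpdef, hθdef]; field_simp; ring
      rw [hep]
      have h4 : P * (k:ℝ)^p * ε^θ / (2^p * Mν^q) = (D * k / 2) ^ p := by
        rw [show D * (k:ℝ) / 2 = (D * (k:ℝ)) / 2 by ring,
          Real.div_rpow (by positivity) (by norm_num),
          Real.mul_rpow hDpos.le (Nat.cast_nonneg k), hDp, hDqdef]
        have h2p : ((2:ℝ)) ^ p ≠ 0 := (Real.rpow_pos_of_pos two_pos p).ne'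
        field_simp
      calc P * (k:ℝ)^p * ε^θ / (2^p * Mν^q) = (D * k / 2) ^ p := h4
        _ ≤ A k := h2
end

section
/- Let f: ℝ^n → ℝ be 1-weakly-quasi-convex (in particular, convex) and differentiable with ν-Hölder continuous gradient with constant M_ν for some ν ∈ [0,1], with minimizer x*, and let ε > 0. Let (x^k), (A_k) be generated by the universal method UAGMsDR, so that A_k f(x^k) ≤ min_x ψ_k(x) + A_k ε/2 with ψ_k(x) = (1/2)‖x − x^0‖₂² + Σ_{i<k} a_{i+1}(f(y^i) + ⟨∇f(y^i), x − y^i⟩), and A_k ≥ [(1+ν)/(1−ν)]^{(1−ν)/(1+ν)} k^{(1+3ν)/(1+ν)} ε^{(1−ν)/(1+ν)} / (2^{(1+3ν)/(1+ν)} M_ν^{2/(1+ν)}). Then for every k: f(x^k) − f(x*) ≤ V(x*, x^0)/A_k + ε/2 where V(x*, x^0) = (1/2)‖x* − x^0‖₂², and if V(x*, x^0) ≤ Θ then an ε-accurate point (f(x^N) − f(x*) ≤ ε) is obtained after at most N ≤ 2^{(2+4ν)/(1+3ν)} [(1−ν)/(1+ν)]^{(1−ν)/(1+3ν)} (M_ν/ε)^{2/(1+3ν)}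 Θ^{(1+ν)/(1+3ν)} iterations. -/
/-!
Weak quasi-convexity puts every linear model `f yⁱ + ⟪∇f yⁱ, x* - yⁱ⟫` below `f x*`, so the
estimate-sequence inequality at `z = x*` gives `A_k (f xᵏ - f x*) ≤ V(x*, x⁰) + A_k ε / 2`.
The iteration bound is the `k` at which the guaranteed growth of `A_k` reaches `2 Θ / ε`, which
makes `V / A_k ≤ ε / 2`. If `M_ν = 0` the gradient is constant, hence zero since it vanishes at
the minimizer, and `f` is constant.
-/

open scoped RealInnerProductSpace
open Finset

theorem le_div_add_of_mul_le {A u D c : ℝ} (hA : 0 < A) (h : A * u ≤ D + A * c) :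
    u ≤ D / A + c := by
  rw [div_add' _ _ _ hA.ne', le_div_iff₀ hA]
  linarith

theorem Real.inv_rpow_self_mul_rpow_self {x : ℝ} (hx : 0 ≤ x) : x⁻¹ ^ x * x ^ x = 1 := by
  rw [Real.inv_rpow hx, inv_mul_cancel₀]
  rcases hx.eq_or_lt with rfl | hx
  · simp
  · exact (Real.rpow_pos_of_pos hx x).ne'

section WeakQuasiConvex

variable {E : Type*} [NormedAddCommGroup E] [InnerProductSpace ℝ E] {f : E → ℝ} {g : E → E}
  {xstar : E}

theorem linearModel_le_of_weakQuasiConvex (hwqc : ∀ z, f z - f xstar ≤ ⟪g z, z - xstar⟫)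
    (y : E) : f y + ⟪g y, xstar - y⟫ ≤ f xstar := by
  have := hwqc y
  rw [← neg_sub, inner_neg_right]
  linarith

theorem mul_sub_le_of_estimateSequence (hwqc : ∀ z, f z - f xstar ≤ ⟪g z, z - xstar⟫)
    {x y : ℕ → E} {a : ℕ → ℝ} (ha : ∀ i, 0 ≤ a (i + 1)) {k : ℕ} {D ε : ℝ}
    (hψ : (∑ i ∈ range k, a (i + 1)) * f (x k) ≤
      D + (∑ i ∈ range k, a (i + 1) * (f (y i) + ⟪g (y i), xstar - y i⟫)) +
        (∑ i ∈ range k, a (i + 1)) * ε / 2) :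
    (∑ i ∈ range k, a (i + 1)) * (f (x k) - f xstar) ≤
      D + (∑ i ∈ range k, a (i + 1)) * (ε / 2) := by
  have hmodel : ∑ i ∈ range k, a (i + 1) * (f (y i) + ⟪g (y i), xstar - y i⟫) ≤
      (∑ i ∈ range k, a (i + 1)) * f xstar := by
    rw [sum_mul]
    exact sum_le_sum fun i _ =>
      mul_le_mul_of_nonneg_left (linearModel_le_of_weakQuasiConvex hwqc (y i)) (ha i)
  linarith

theorem le_of_weakQuasiConvex_of_gradient_const [CompleteSpace E]
    (hdiff : HasGradientAt f (g xstar) xstar) (hstar : ∀ z, f xstar ≤ f z)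
    (hconst : ∀ z, g z = g xstar) (hwqc : ∀ z, f z - f xstar ≤ ⟪g z, z - xstar⟫) (z : E) :
    f z ≤ f xstar := by
  have hmin : IsLocalMin f xstar := Filter.Eventually.of_forall hstar
  have hzero : g xstar = 0 :=
    (LinearIsometryEquiv.map_eq_zero_iff _).mp (hmin.hasFDerivAt_eq_zero hdiff.hasFDerivAt)
  have := hwqc z
  rw [hconst, hzero, inner_zero_left] at this
  linarith

end WeakQuasiConvex

-- The lower bound on `A_k` guaranteed by UAGMsDR, at `t = k`.
noncomputable def uagmRate (ν M ε t : ℝ) : ℝ :=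
  ((1 + ν) / (1 - ν)) ^ ((1 - ν) / (1 + ν)) * t ^ ((1 + 3 * ν) / (1 + ν)) *
    ε ^ ((1 - ν) / (1 + ν)) / ((2 : ℝ) ^ ((1 + 3 * ν) / (1 + ν)) * M ^ (2 / (1 + ν)))

noncomputable def uagmIterationBound (ν M ε Θ : ℝ) : ℝ :=
  (2 : ℝ) ^ ((2 + 4 * ν) / (1 + 3 * ν)) * ((1 - ν) / (1 + ν)) ^ ((1 - ν) / (1 + 3 * ν)) *
    (M / ε) ^ (2 / (1 + 3 * ν)) * Θ ^ ((1 + ν) / (1 + 3 * ν))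

section Rate

variable {ν M ε Θ : ℝ}

theorem uagmRate_le_uagmRate (hν : ν ∈ Set.Icc (0 : ℝ) 1) (hM : 0 ≤ M) (hε : 0 ≤ ε)
    {s t : ℝ} (hs : 0 ≤ s) (hst : s ≤ t) : uagmRate ν M ε s ≤ uagmRate ν M ε t := by
  obtain ⟨hν0, hν1⟩ := hν
  have hp : 0 ≤ (1 + ν) / (1 - ν) := div_nonneg (by linarith) (by linarith)
  unfold uagmRate
  gcongr

theorem uagmIterationBound_nonneg (hν : ν ∈ Set.Icc (0 : ℝ) 1) (hM : 0 ≤ M) (hε : 0 ≤ ε)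
    (hΘ : 0 ≤ Θ) : 0 ≤ uagmIterationBound ν M ε Θ := by
  obtain ⟨hν0, hν1⟩ := hν
  have hp : 0 ≤ (1 - ν) / (1 + ν) := div_nonneg (by linarith) (by linarith)
  unfold uagmIterationBound
  have := Real.rpow_nonneg hp ((1 - ν) / (1 + 3 * ν))
  have := Real.rpow_nonneg (div_nonneg hM hε) (2 / (1 + 3 * ν))
  have := Real.rpow_nonneg hΘ ((1 + ν) / (1 + 3 * ν))
  positivity

theorem uagmRate_uagmIterationBound (hν : ν ∈ Set.Icc (0 : ℝ) 1) (hM : 0 < M) (hε : 0 < ε)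
    (hΘ : 0 ≤ Θ) : uagmRate ν M ε (uagmIterationBound ν M ε Θ) = 2 * Θ / ε := by
  obtain ⟨hν0, hν1⟩ := hν
  unfold uagmRate
  set p := (1 - ν) / (1 + ν) with hp_def
  set q := (1 + 3 * ν) / (1 + ν) with hq_def
  have hp : 0 ≤ p := div_nonneg (by linarith) (by linarith)
  have hB : uagmIterationBound ν M ε Θ ^ q =
      2 * 2 ^ q * p ^ p * (M ^ (2 / (1 + ν)) / ε ^ (2 / (1 + ν))) * Θ := by
    unfold uagmIterationBound
    have := Real.rpow_nonneg hp ((1 - ν) / (1 + 3 * ν))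
    have := Real.rpow_nonneg (div_nonneg hM.le hε.le) (2 / (1 + 3 * ν))
    rw [Real.mul_rpow (by positivity) (by positivity),
      Real.mul_rpow (by positivity) (by positivity),
      Real.mul_rpow (by positivity) (by positivity),
      ← Real.rpow_mul (by norm_num), ← Real.rpow_mul hp,
      ← Real.rpow_mul (by positivity), ← Real.rpow_mul hΘ, Real.div_rpow hM.le hε.le]
    have hcancel : ∀ c : ℝ, c / (1 + 3 * ν) * q = c / (1 + ν) := fun c => by
      rw [hq_def]; field_simp
    have h2q : (2 + 4 * ν) / (1 + ν) = 1 + q := by rw [hq_def]; field_simp; ring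
    rw [hcancel, hcancel, hcancel, hcancel, h2q, div_self (by positivity), Real.rpow_one,
      Real.rpow_add (by norm_num), Real.rpow_one]
  have hεp : ε ^ p = ε⁻¹ * ε ^ (2 / (1 + ν)) := by
    rw [← Real.rpow_neg_one, ← Real.rpow_add hε, hp_def]
    congr 1
    field_simp
    ring
  have hpq : (1 + ν) / (1 - ν) = p⁻¹ := (inv_div _ _).symm
  rw [hB, hεp, hpq]
  have key := Real.inv_rpow_self_mul_rpow_self hp
  generalize p⁻¹ ^ p = u at key ⊢
  calc _ = u * p ^ p * (2 * Θ / ε) := by field_simp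
    _ = 2 * Θ / ε := by rw [key, one_mul]

end Rate

/-- (Theorem 9 of the paper.) For a `1`-weakly-quasi-convex `f` with
`ν`-Hölder continuous gradient, the universal method UAGMsDR satisfies
`f (x k) - f x* ≤ V(x*, x⁰)/A k + ε/2` with `V(x*, x⁰) = (1/2)‖x* - x⁰‖²`, and if
`V(x*, x⁰) ≤ Θ` an `ε`-accurate point is obtained after at most
`2^{(2+4ν)/(1+3ν)} ((1-ν)/(1+ν))^{(1-ν)/(1+3ν)} (M_ν/ε)^{2/(1+3ν)} Θ^{(1+ν)/(1+3ν)}`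
iterations. -/
theorem stmt_15 (n : ℕ) (ν Mν ε : ℝ) (hν : ν ∈ Set.Icc (0 : ℝ) 1) (hMν : 0 ≤ Mν)
    (hε : 0 < ε)
    (f : EuclideanSpace ℝ (Fin n) → ℝ)
    (g : EuclideanSpace ℝ (Fin n) → EuclideanSpace ℝ (Fin n))
    (hdiff : ∀ z, HasGradientAt f (g z) z)
    (hhold : ∀ z w, ‖g z - g w‖ ≤ Mν * ‖z - w‖ ^ ν)
    (xstar : EuclideanSpace ℝ (Fin n)) (hstar : ∀ z, f xstar ≤ f z)
    (hwqc : ∀ z, f z - f xstar ≤ ⟪g z, z - xstar⟫)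
    (x y : ℕ → EuclideanSpace ℝ (Fin n)) (a A : ℕ → ℝ)
    (hapos : ∀ i, 0 < a (i + 1))
    (hA : ∀ k, A k = ∑ i ∈ Finset.range k, a (i + 1))
    (hψ : ∀ k (z : EuclideanSpace ℝ (Fin n)), A k * f (x k) ≤
      (1 / 2) * ‖z - x 0‖ ^ 2 +
        (∑ i ∈ Finset.range k, a (i + 1) * (f (y i) + ⟪g (y i), z - y i⟫)) +
        A k * ε / 2)
    (hArate : ∀ k : ℕ,
      ((1 + ν) / (1 - ν)) ^ ((1 - ν) / (1 + ν)) *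
        (k : ℝ) ^ ((1 + 3 * ν) / (1 + ν)) * ε ^ ((1 - ν) / (1 + ν)) /
        ((2 : ℝ) ^ ((1 + 3 * ν) / (1 + ν)) * Mν ^ (2 / (1 + ν))) ≤ A k) :
    (∀ k : ℕ, 1 ≤ k →
      f (x k) - f xstar ≤ ((1 / 2) * ‖xstar - x 0‖ ^ 2) / A k + ε / 2) ∧
    (∀ Θ : ℝ, (1 / 2) * ‖xstar - x 0‖ ^ 2 ≤ Θ →
      ∀ N : ℕ, (2 : ℝ) ^ ((2 + 4 * ν) / (1 + 3 * ν)) *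
          ((1 - ν) / (1 + ν)) ^ ((1 - ν) / (1 + 3 * ν)) *
          (Mν / ε) ^ (2 / (1 + 3 * ν)) * Θ ^ ((1 + ν) / (1 + 3 * ν)) ≤ (N : ℝ) →
        f (x N) - f xstar ≤ ε) := by
  have hV : 0 ≤ (1 / 2) * ‖xstar - x 0‖ ^ 2 := by positivity
  have hestimate : ∀ k, A k * (f (x k) - f xstar) ≤
      (1 / 2) * ‖xstar - x 0‖ ^ 2 + A k * (ε / 2) := fun k => by
    have hψk := hψ k xstar
    rw [hA] at hψk ⊢
    exact mul_sub_le_of_estimateSequence hwqc (fun i => (hapos i).le) hψk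
  have hApos : ∀ k, 1 ≤ k → 0 < A k := fun k hk =>
    hA k ▸ sum_pos (fun i _ => hapos i) (nonempty_range_iff.mpr (by omega))
  refine ⟨fun k hk => le_div_add_of_mul_le (hApos k hk) (hestimate k), fun Θ hΘ N hN => ?_⟩
  rcases hMν.eq_or_lt with rfl | hM
  · have hconst : ∀ z, g z = g xstar := fun z =>
      sub_eq_zero.mp (norm_le_zero_iff.mp (by simpa using hhold z xstar))
    have := le_of_weakQuasiConvex_of_gradient_const (hdiff xstar) hstar hconst hwqc (x N)
    linarith
  have hrate : 2 * Θ / ε ≤ A N := calc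
    2 * Θ / ε = uagmRate ν Mν ε (uagmIterationBound ν Mν ε Θ) :=
      (uagmRate_uagmIterationBound hν hM hε (hV.trans hΘ)).symm
    _ ≤ uagmRate ν Mν ε N :=
      uagmRate_le_uagmRate hν hM.le hε.le
        (uagmIterationBound_nonneg hν hM.le hε.le (hV.trans hΘ)) hN
    _ ≤ A N := hArate N
  rw [div_le_iff₀ hε] at hrate
  rcases N.eq_zero_or_pos with rfl | hN
  · have hx0 : ‖xstar - x 0‖ = 0 := by
      rw [hA 0, sum_range_zero, zero_mul] at hrate
      nlinarith [norm_nonneg (xstar - x 0)]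
    rw [← sub_eq_zero.mp (norm_eq_zero.mp hx0), sub_self]
    exact hε.le
  · exact le_of_mul_le_mul_left (by linarith [hestimate N]) (hApos N hN)
end

section
/- Let f: ℝ^n → ℝ be L-smooth, bounded below by f(x*), and let ε > 0. Suppose sequences (x^k), (y^k), (a_k), (A_k) produced by the universal method UAGMsDR satisfy, for every k: f(x^{k+1}) ≤ f(y^k) − (1/(2L))‖∇f(y^k)‖₂² + (a_{k+1} ε)/(2 A_{k+1}) and f(y^k) ≤ f(x^k), where A_{k+1} = A_k + a_{k+1} ≥ a_{k+1} > 0. Then after N steps, min_{0 ≤ k ≤ N−1} ‖∇f(y^k)‖₂² ≤ 2L(f(x^0) − f(x*))/N + Lε. -/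
/-!
Summing the per-step decrease `f (x k) - f (x (k+1)) ≥ ‖∇f (y k)‖² / (2L) - ε/2` over `k < N`
telescopes to at most `f (x 0) - f x*`, so the smallest of the `N` decrements is at most their
average `(f (x 0) - f x*) / N`.
-/

open Finset

lemma mul_div_two_mul_le_half {a A ε : ℝ} (ha : 0 < a) (haA : a ≤ A) (hε : 0 ≤ ε) :
    a * ε / (2 * A) ≤ ε / 2 := by
  rw [div_le_div_iff₀ (by linarith) two_pos]
  nlinarith

lemma exists_decrement_le_average {u d : ℕ → ℝ} {m : ℝ} {N : ℕ} (hN : 0 < N)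
    (hstep : ∀ k < N, u (k + 1) ≤ u k - d k) (hm : m ≤ u N) :
    ∃ k < N, d k ≤ (u 0 - m) / N := by
  have hsum : ∑ k ∈ range N, d k ≤ ∑ _k ∈ range N, (u 0 - m) / N := calc
    ∑ k ∈ range N, d k ≤ ∑ k ∈ range N, (u k - u (k + 1)) :=
      sum_le_sum fun k hk => by linarith [hstep k (mem_range.mp hk)]
    _ = u 0 - u N := sum_range_sub' u N
    _ ≤ u 0 - m := by linarith
    _ = ∑ _k ∈ range N, (u 0 - m) / N := by
      rw [sum_const, card_range, nsmul_eq_mul, mul_div_cancel₀ _ (by positivity)]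
  obtain ⟨k, hk, hle⟩ := exists_le_of_sum_le (nonempty_range_iff.mpr hN.ne') hsum
  exact ⟨k, mem_range.mp hk, hle⟩

theorem stmt_16_general (n : ℕ) (L ε : ℝ) (hL : 0 < L) (hε : 0 < ε)
    (f : EuclideanSpace ℝ (Fin n) → ℝ)
    (g : EuclideanSpace ℝ (Fin n) → EuclideanSpace ℝ (Fin n))
    (xstar : EuclideanSpace ℝ (Fin n)) (hstar : ∀ z, f xstar ≤ f z)
    (x y : ℕ → EuclideanSpace ℝ (Fin n)) (a A : ℕ → ℝ)
    (hapos : ∀ k, 0 < a (k + 1))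
    (haA : ∀ k, a (k + 1) ≤ A (k + 1))
    (hdec : ∀ k, f (x (k + 1)) ≤
      f (y k) - 1 / (2 * L) * ‖g (y k)‖ ^ 2 + a (k + 1) * ε / (2 * A (k + 1)))
    (hmono : ∀ k, f (y k) ≤ f (x k))
    (N : ℕ) (hN : 0 < N) :
    ∃ k < N, ‖g (y k)‖ ^ 2 ≤ 2 * L * (f (x 0) - f xstar) / N + L * ε := by
  have hstep : ∀ k < N, f (x (k + 1)) ≤ f (x k) - (1 / (2 * L) * ‖g (y k)‖ ^ 2 - ε / 2) :=
    fun k _ => by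
      linarith [hdec k, hmono k, mul_div_two_mul_le_half (hapos k) (haA k) hε.le]
  obtain ⟨k, hk, hle⟩ := exists_decrement_le_average (u := fun k => f (x k)) hN hstep (hstar (x N))
  refine ⟨k, hk, ?_⟩
  calc ‖g (y k)‖ ^ 2 = 2 * L * (1 / (2 * L) * ‖g (y k)‖ ^ 2 - ε / 2) + L * ε := by
        field_simp; ring
    _ ≤ 2 * L * ((f (x 0) - f xstar) / N) + L * ε := by gcongr
    _ = 2 * L * (f (x 0) - f xstar) / N + L * ε := by rw [mul_div_assoc]

/-- (Theorem 10 of the paper.) For an `L`-smooth `f` bounded below by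
`f x*`, if the universal method guarantees
`f (x (k+1)) ≤ f (y k) - (1/(2L))‖∇f (y k)‖² + a_{k+1} ε / (2 A_{k+1})` and
`f (y k) ≤ f (x k)`, then after `N` steps
`min_{0 ≤ k ≤ N-1} ‖∇f (y k)‖² ≤ 2 L (f (x 0) - f x*)/N + L ε`. -/
theorem stmt_16 (n : ℕ) (L ε : ℝ) (hL : 0 < L) (hε : 0 < ε)
    (f : EuclideanSpace ℝ (Fin n) → ℝ)
    (g : EuclideanSpace ℝ (Fin n) → EuclideanSpace ℝ (Fin n))
    (hdiff : ∀ z, HasGradientAt f (g z) z)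
    (hlip : ∀ z w, ‖g z - g w‖ ≤ L * ‖z - w‖)
    (xstar : EuclideanSpace ℝ (Fin n)) (hstar : ∀ z, f xstar ≤ f z)
    (x y : ℕ → EuclideanSpace ℝ (Fin n)) (a A : ℕ → ℝ)
    (hapos : ∀ k, 0 < a (k + 1))
    (hAk : ∀ k, A (k + 1) = A k + a (k + 1))
    (haA : ∀ k, a (k + 1) ≤ A (k + 1))
    (hdec : ∀ k, f (x (k + 1)) ≤
      f (y k) - 1 / (2 * L) * ‖g (y k)‖ ^ 2 + a (k + 1) * ε / (2 * A (k + 1)))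
    (hmono : ∀ k, f (y k) ≤ f (x k))
    (N : ℕ) (hN : 0 < N) :
    ∃ k < N, ‖g (y k)‖ ^ 2 ≤ 2 * L * (f (x 0) - f xstar) / N + L * ε :=
  stmt_16_general n L ε hL hε f g xstar hstar x y a A hapos haA hdec hmono N hN
end

section
/- Let γ ∈ [1/2, 1] and let 0 ≤ A ≤ B be real numbers. Then (B^{1−γ} + A^{1−γ})(B^γ − A^γ) ≥ B − A; equivalently, B^γ − A^γ ≥ (B − A)/(B^{1−γ} + A^{1−γ}). In particular, if a sequence (A_k) with A_0 = 0, A_{k+1} = A_k + a_{k+1}, a_{k+1} > 0 satisfies a_{k+1}/(2 A_{k+1}^{1−γ}) ≥ c for all k and some c > 0, then A_N ≥ (cN)^{1/γ}. -/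
/-!
Expanding the product, `(B^{1-γ} + A^{1-γ})(B^γ - A^γ) - (B - A) = A^{1-γ} B^γ - B^{1-γ} A^γ
= (AB)^{1-γ} (B^{2γ-1} - A^{2γ-1})`, which is nonnegative because `2γ - 1 ≥ 0`.
Bounding `A^{1-γ} ≤ B^{1-γ}` (this needs `γ ≤ 1`) turns this into
`B^γ - A^γ ≥ (B - A) / (2 B^{1-γ})`, so along the sequence `A_k^γ` grows by at least `c`
per step and `A_N^γ ≥ c N`.
-/

namespace Real

variable {A B γ : ℝ}

theorem rpow_mul_rpow_le_rpow_mul_rpow (hγ : 1 / 2 ≤ γ) (hA : 0 ≤ A) (hAB : A ≤ B) :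
    B ^ (1 - γ) * A ^ γ ≤ A ^ (1 - γ) * B ^ γ := by
  have hB : 0 ≤ B := hA.trans hAB
  have hsplit : ∀ {x : ℝ}, 0 ≤ x → x ^ γ = x ^ (1 - γ) * x ^ (2 * γ - 1) := fun hx => by
    rw [← rpow_add' hx (by linarith)]
    ring_nf
  rw [hsplit hA, hsplit hB, mul_left_comm]
  gcongr
  linarith

theorem sub_le_rpow_add_mul_rpow_sub (hγ : 1 / 2 ≤ γ) (hA : 0 ≤ A) (hAB : A ≤ B) :
    B - A ≤ (B ^ (1 - γ) + A ^ (1 - γ)) * (B ^ γ - A ^ γ) := by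
  have hrecombine : ∀ {x : ℝ}, 0 ≤ x → x ^ (1 - γ) * x ^ γ = x := fun hx => by
    rw [← rpow_add' hx (by norm_num), sub_add_cancel, rpow_one]
  have hcross := rpow_mul_rpow_le_rpow_mul_rpow hγ hA hAB
  have hA' := hrecombine hA
  have hB' := hrecombine (hA.trans hAB)
  linarith

theorem sub_div_two_mul_rpow_le_rpow_sub_rpow (hγ : γ ∈ Set.Icc (1 / 2 : ℝ) 1)
    (hA : 0 ≤ A) (hAB : A < B) :
    (B - A) / (2 * B ^ (1 - γ)) ≤ B ^ γ - A ^ γ := by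
  obtain ⟨hγ₁, hγ₂⟩ := hγ
  have hB : 0 < B := hA.trans_lt hAB
  have hpow_le : A ^ (1 - γ) ≤ B ^ (1 - γ) := rpow_le_rpow hA hAB.le (by linarith)
  have hdiff : 0 ≤ B ^ γ - A ^ γ := sub_nonneg.2 (rpow_le_rpow hA hAB.le (by linarith))
  rw [div_le_iff₀ (by positivity)]
  calc B - A ≤ (B ^ (1 - γ) + A ^ (1 - γ)) * (B ^ γ - A ^ γ) :=
        sub_le_rpow_add_mul_rpow_sub hγ₁ hA hAB.le
    _ ≤ (2 * B ^ (1 - γ)) * (B ^ γ - A ^ γ) := by gcongr; linarith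
    _ = (B ^ γ - A ^ γ) * (2 * B ^ (1 - γ)) := mul_comm _ _

end Real

theorem mul_le_sub_of_le_sub_succ {f : ℕ → ℝ} {c : ℝ} (hf : ∀ k, c ≤ f (k + 1) - f k) (N : ℕ) :
    c * N ≤ f N - f 0 := by
  induction N with
  | zero => simp
  | succ n ih =>
    push_cast
    linarith [hf n]

/-- Elementary inequality used for the growth of the coefficients in the
universal method: for `γ ∈ [1/2, 1]` and `0 ≤ A ≤ B`,
`(B^{1-γ} + A^{1-γ})(B^γ - A^γ) ≥ B - A`; consequently, if `A 0 = 0`,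
`A (k+1) = A k + a (k+1)` with `a (k+1) > 0` and `a (k+1)/(2 A (k+1)^{1-γ}) ≥ c > 0`
for all `k`, then `A N ≥ (c N)^{1/γ}`. -/
theorem stmt_18 (γ : ℝ) (hγ : γ ∈ Set.Icc (1 / 2 : ℝ) 1) :
    (∀ A B : ℝ, 0 ≤ A → A ≤ B →
      B - A ≤ (B ^ (1 - γ) + A ^ (1 - γ)) * (B ^ γ - A ^ γ)) ∧
    (∀ (a A : ℕ → ℝ) (c : ℝ), 0 < c → A 0 = 0 →
      (∀ k, 0 < a (k + 1)) → (∀ k, A (k + 1) = A k + a (k + 1)) →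
      (∀ k, c ≤ a (k + 1) / (2 * (A (k + 1)) ^ (1 - γ))) →
      ∀ N : ℕ, (c * N) ^ (1 / γ) ≤ A N) := by
  have hγ_pos : 0 < γ := by linarith [hγ.1]
  refine ⟨fun A B hA hAB => Real.sub_le_rpow_add_mul_rpow_sub hγ.1 hA hAB, ?_⟩
  intro a A c hc hA₀ ha hrec hc_le N
  have hA_lt : ∀ k, A k < A (k + 1) := fun k => by linarith [hrec k, ha k]
  have hA_nonneg : ∀ k, 0 ≤ A k := fun k =>
    hA₀ ▸ monotone_nat_of_le_succ (fun k => (hA_lt k).le) (Nat.zero_le k)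
  have hstep : ∀ k, c ≤ A (k + 1) ^ γ - A k ^ γ := fun k => by
    have h := Real.sub_div_two_mul_rpow_le_rpow_sub_rpow hγ (hA_nonneg k) (hA_lt k)
    rw [show A (k + 1) - A k = a (k + 1) by linarith [hrec k]] at h
    exact (hc_le k).trans h
  have hgrowth := mul_le_sub_of_le_sub_succ (f := fun k => A k ^ γ) hstep N
  rw [hA₀, Real.zero_rpow hγ_pos.ne', sub_zero] at hgrowth
  rw [one_div, Real.rpow_inv_le_iff_of_pos (by positivity) (hA_nonneg N) hγ_pos]
  exact hgrowth
end

section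
/- Let Q ⊆ ℝ^n be a closed convex set, f: ℝ^n → ℝ convex, A a linear map from ℝ^n to ℝ^m, b ∈ ℝ^m, and define the dual objective φ(λ) = ⟨λ, b⟩ + max_{x∈Q}(−f(x) − ⟨Aᵀλ, x⟩), with x(λ) ∈ Q a maximizer so that ∇φ(λ) = b − A x(λ) is a subgradient of φ. Assume the dual problem min_λ φ(λ) has a solution λ* with ‖λ*‖₂ ≤ R, and that the subgradient of φ is ν-Hölder continuous with constant M_ν for some ν ∈ [0,1]. Let the sequences (λ^k), (η^k), (ζ^k), (a_k), (A_k) be generated by the primal-dual universal method (Algorithm 5) started from λ^0 = ζ^0 = η^0 = 0 with parameter ε > 0, so that A_k φ(η^k) ≤ min_{λ∈ℝ^m}{ Σ_{i=0}^{k−1} a_{i+1}(φ(λ^i) + ⟨∇φ(λ^i), λ − λ^i⟩) + (1/2)‖λ‖₂² } + A_k ε/2, and set x̂^k = (1/A_k) Σ_{i=0}^{k−1} a_{i+1} x(λ^i). Then for all k ≥ 1: ‖A x̂^k − b‖₂ ≤ 2R/A_k + ε/(2R) and |φ(η^k) + f(x̂^k)| ≤ 2R²/A_k + ε/2, where A_k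 ≥ [(1+ν)/(1−ν)]^{(1−ν)/(1+ν)} k^{(1+3ν)/(1+ν)} ε^{(1−ν)/(1+ν)} / (2^{(1+3ν)/(1+ν)} M_ν^{2/(1+ν)}). -/
/-!
Write `g = A x̂ - b`. Summing the linear models of `φ` at the points `λⁱ`, the identity
`φ(λ) - ⟪∇φ(λ), λ⟫ = -f(x(λ))` and Jensen's inequality for `f` turn the guarantee of the method
into `A_k (φ(ηᵏ) + f(x̂ᵏ)) ≤ -A_k ⟪g, z⟫ + ‖z‖²/2 + A_k ε/2` for every `z`. Weak duality at
`λ*` gives `φ(ηᵏ) + f(x̂ᵏ) ≥ φ(λ*) + f(x̂ᵏ) ≥ -R ‖g‖`. Testing the first inequality with the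
vector `z` of norm `2R` in the direction of `g` and comparing with the second bounds `‖g‖`, and
then the gap on both sides.
-/

open scoped RealInnerProductSpace
open Finset ContinuousLinearMap

theorem Finset.sum_smul_eq_smul_centerMass {R E ι : Type*} [Field R] [AddCommGroup E]
    [Module R E] (t : Finset ι) {w : ι → R} (z : ι → E) (hw : ∑ i ∈ t, w i ≠ 0) :
    ∑ i ∈ t, w i • z i = (∑ i ∈ t, w i) • t.centerMass w z := by
  rw [centerMass, smul_inv_smul₀ hw]

theorem ConvexOn.sum_mul_map_centerMass_le {E ι : Type*} [AddCommGroup E] [Module ℝ E]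
    {s : Set E} {f : E → ℝ} (hf : ConvexOn ℝ s f) {t : Finset ι} {w : ι → ℝ} {p : ι → E}
    (h₀ : ∀ i ∈ t, 0 ≤ w i) (h₁ : 0 < ∑ i ∈ t, w i) (hmem : ∀ i ∈ t, p i ∈ s) :
    (∑ i ∈ t, w i) * f (t.centerMass w p) ≤ ∑ i ∈ t, w i * f (p i) := by
  have hJensen : f (t.centerMass w p) ≤ (∑ i ∈ t, w i)⁻¹ * ∑ i ∈ t, w i * f (p i) :=
    hf.map_centerMass_le h₀ h₁ hmem
  rwa [le_inv_mul_iff₀ h₁] at hJensen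

theorem exists_norm_le_inner_eq_mul_norm {F : Type*} [NormedAddCommGroup F]
    [InnerProductSpace ℝ F] (g : F) {r : ℝ} (hr : 0 ≤ r) :
    ∃ z : F, ‖z‖ ≤ r ∧ ⟪g, z⟫ = r * ‖g‖ := by
  rcases eq_or_ne g 0 with rfl | hg
  · exact ⟨0, by simpa using hr, by simp⟩
  · have hg' : ‖g‖ ≠ 0 := norm_ne_zero_iff.mpr hg
    refine ⟨(r / ‖g‖) • g, ?_, ?_⟩
    · rw [norm_smul, Real.norm_of_nonneg (by positivity), div_mul_cancel₀ _ hg']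
    · rw [real_inner_smul_right, real_inner_self_eq_norm_sq]
      field_simp

theorem norm_le_and_abs_le_of_forall_le {F : Type*} [NormedAddCommGroup F]
    [InnerProductSpace ℝ F] {S R D ε : ℝ} {g : F} (hS : 0 < S) (hR : 0 < R)
    (hlow : -(R * ‖g‖) ≤ D)
    (hup : ∀ z : F, S * D ≤ -(S * ⟪g, z⟫) + (1 / 2) * ‖z‖ ^ 2 + S * ε / 2) :
    ‖g‖ ≤ 2 * R / S + ε / (2 * R) ∧ |D| ≤ 2 * R ^ 2 / S + ε / 2 := by
  obtain ⟨z, hz, hgz⟩ := exists_norm_le_inner_eq_mul_norm g (by positivity : 0 ≤ 2 * R)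
  have hz2 : ‖z‖ ^ 2 ≤ (2 * R) ^ 2 := pow_le_pow_left₀ (norm_nonneg z) hz 2
  have htest : S * D ≤ -(S * (2 * R * ‖g‖)) + 2 * R ^ 2 + S * ε / 2 := by
    have := hup z
    rw [hgz] at this
    linarith
  have hg : ‖g‖ ≤ 2 * R / S + ε / (2 * R) := by
    have hlowS := mul_le_mul_of_nonneg_left hlow hS.le
    rw [div_add_div _ _ hS.ne' (by positivity), le_div_iff₀ (by positivity)]
    linarith
  refine ⟨hg, abs_le.mpr ⟨?_, ?_⟩⟩
  · have : R * ‖g‖ ≤ 2 * R ^ 2 / S + ε / 2 := by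
      calc R * ‖g‖ ≤ R * (2 * R / S + ε / (2 * R)) := by gcongr
        _ = 2 * R ^ 2 / S + ε / 2 := by field_simp
    linarith
  · rw [div_add' _ _ _ hS.ne', le_div_iff₀ hS]
    have : 0 ≤ S * (2 * R * ‖g‖) := by positivity
    linarith

section Duality

variable {E F : Type*} [NormedAddCommGroup E] [InnerProductSpace ℝ E] [CompleteSpace E]
  [NormedAddCommGroup F] [InnerProductSpace ℝ F] [CompleteSpace F]
  {A : E →L[ℝ] F} {b : F} {f : E → ℝ} {x : F → E} {φ : F → ℝ} {g : F → F}

theorem dual_add_inner_grad_sub_eq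
    (hφ : ∀ lam, φ lam = ⟪lam, b⟫ + (-f (x lam) - ⟪adjoint A lam, x lam⟫))
    (hg : ∀ lam, g lam = b - A (x lam)) (lam z : F) :
    φ lam + ⟪g lam, z - lam⟫ = -f (x lam) + ⟪b - A (x lam), z⟫ := by
  rw [hφ, hg, inner_sub_right, inner_sub_left _ _ lam, adjoint_inner_left,
    real_inner_comm b lam, real_inner_comm (A (x lam)) lam]
  ring

theorem sum_mul_linearization_le_mul_of_convexOn (hf : ConvexOn ℝ Set.univ f)
    (hφ : ∀ lam, φ lam = ⟪lam, b⟫ + (-f (x lam) - ⟪adjoint A lam, x lam⟫))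
    (hg : ∀ lam, g lam = b - A (x lam)) {ι : Type*} {t : Finset ι} {w : ι → ℝ}
    (h₀ : ∀ i ∈ t, 0 ≤ w i) (h₁ : 0 < ∑ i ∈ t, w i) (l : ι → F) (z : F) :
    ∑ i ∈ t, w i * (φ (l i) + ⟪g (l i), z - l i⟫) ≤
      (∑ i ∈ t, w i) * (-f (t.centerMass w fun i => x (l i)) -
        ⟪A (t.centerMass w fun i => x (l i)) - b, z⟫) := by
  set xhat := t.centerMass w fun i => x (l i)
  have hsum : ∑ i ∈ t, w i • (b - A (x (l i))) = (∑ i ∈ t, w i) • (b - A xhat) := by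
    simp only [smul_sub, sum_sub_distrib, ← sum_smul, ← map_smul, ← map_sum]
    rw [sum_smul_eq_smul_centerMass t _ h₁.ne', map_smul]
  have hJensen := hf.sum_mul_map_centerMass_le h₀ h₁ fun i _ => Set.mem_univ (x (l i))
  calc ∑ i ∈ t, w i * (φ (l i) + ⟪g (l i), z - l i⟫)
      = -∑ i ∈ t, w i * f (x (l i)) + ⟪∑ i ∈ t, w i • (b - A (x (l i))), z⟫ := by
        simp only [dual_add_inner_grad_sub_eq hφ hg, sum_inner, real_inner_smul_left, mul_add,
          sum_add_distrib, mul_neg, sum_neg_distrib]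
    _ ≤ _ := by
        rw [hsum, real_inner_smul_left, ← neg_sub b, inner_neg_left]
        linarith

theorem neg_mul_norm_le_dual_add {Q : Set E}
    (hmax : ∀ lam, ∀ y ∈ Q, -f y - ⟪adjoint A lam, y⟫ ≤ -f (x lam) - ⟪adjoint A lam, x lam⟫)
    (hφ : ∀ lam, φ lam = ⟪lam, b⟫ + (-f (x lam) - ⟪adjoint A lam, x lam⟫))
    {lam : F} {R : ℝ} (hR : ‖lam‖ ≤ R) {y : E} (hy : y ∈ Q) :
    -(R * ‖A y - b‖) ≤ φ lam + f y := by
  have hweak : -f y - ⟪lam, A y - b⟫ ≤ φ lam := by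
    rw [hφ, inner_sub_right, ← adjoint_inner_left]
    linarith [hmax lam y hy]
  have hCS : ⟪lam, A y - b⟫ ≤ R * ‖A y - b‖ :=
    (real_inner_le_norm _ _).trans (mul_le_mul_of_nonneg_right hR (norm_nonneg _))
  linarith

end Duality

theorem stmt_19_general (nn m : ℕ) (ε R : ℝ) (hRpos : 0 < R)
    (Q : Set (EuclideanSpace ℝ (Fin nn))) (hQconv : Convex ℝ Q)
    (f : EuclideanSpace ℝ (Fin nn) → ℝ) (hconv : ConvexOn ℝ Set.univ f)
    (Amap : EuclideanSpace ℝ (Fin nn) →L[ℝ] EuclideanSpace ℝ (Fin m))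
    (b : EuclideanSpace ℝ (Fin m))
    (φ : EuclideanSpace ℝ (Fin m) → ℝ)
    (xsel : EuclideanSpace ℝ (Fin m) → EuclideanSpace ℝ (Fin nn))
    (hxsel : ∀ lam, xsel lam ∈ Q)
    (hmax : ∀ lam, ∀ z ∈ Q, -f z - ⟪ContinuousLinearMap.adjoint Amap lam, z⟫ ≤
      -f (xsel lam) - ⟪ContinuousLinearMap.adjoint Amap lam, xsel lam⟫)
    (hφ : ∀ lam, φ lam = ⟪lam, b⟫ +
      (-f (xsel lam) - ⟪ContinuousLinearMap.adjoint Amap lam, xsel lam⟫))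
    (gφ : EuclideanSpace ℝ (Fin m) → EuclideanSpace ℝ (Fin m))
    (hgφ : ∀ lam, gφ lam = b - Amap (xsel lam))
    (lamstar : EuclideanSpace ℝ (Fin m)) (hstar : ∀ lam, φ lamstar ≤ φ lam)
    (hR : ‖lamstar‖ ≤ R)
    (lam η : ℕ → EuclideanSpace ℝ (Fin m)) (a A : ℕ → ℝ)
    (hapos : ∀ i, 0 < a (i + 1))
    (hA : ∀ k, A k = ∑ i ∈ Finset.range k, a (i + 1))
    (hrec : ∀ k (z : EuclideanSpace ℝ (Fin m)), A k * φ (η k) ≤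
      (∑ i ∈ Finset.range k, a (i + 1) * (φ (lam i) + ⟪gφ (lam i), z - lam i⟫)) +
        (1 / 2) * ‖z‖ ^ 2 + A k * ε / 2)
    (xhat : ℕ → EuclideanSpace ℝ (Fin nn))
    (hxhat : ∀ k, xhat k = (A k)⁻¹ • ∑ i ∈ Finset.range k, a (i + 1) • xsel (lam i)) :
    ∀ k : ℕ, 1 ≤ k →
      ‖Amap (xhat k) - b‖ ≤ 2 * R / A k + ε / (2 * R) ∧
      |φ (η k) + f (xhat k)| ≤ 2 * R ^ 2 / A k + ε / 2 := by
  intro k hk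
  have hw₀ : ∀ i ∈ range k, 0 ≤ a (i + 1) := fun i _ => (hapos i).le
  have hAk : 0 < A k :=
    hA k ▸ sum_pos (fun i _ => hapos i) (nonempty_range_iff.mpr (by omega))
  have hcenter : xhat k = (range k).centerMass (fun i => a (i + 1)) fun i => xsel (lam i) := by
    rw [hxhat, hA]
    rfl
  have hxQ : xhat k ∈ Q := hcenter ▸ hQconv.centerMass_mem hw₀ (hA k ▸ hAk) fun i _ => hxsel _
  refine norm_le_and_abs_le_of_forall_le hAk hRpos ?_ fun z => ?_
  · linarith [neg_mul_norm_le_dual_add hmax hφ hR hxQ, hstar (η k)]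
  · have hmodel := sum_mul_linearization_le_mul_of_convexOn hconv hφ hgφ hw₀ (hA k ▸ hAk) lam z
    rw [← hA, ← hcenter] at hmodel
    linarith [hrec k z]

/-- (Theorem 12 of the paper.) Primal-dual properties of the universal
method applied to the dual `φ(λ) = ⟪λ, b⟫ + max_{x ∈ Q}(-f x - ⟪Aᵀλ, x⟫)` of the linearly
constrained problem `min_{x ∈ Q, Ax = b} f x`: with `x̂^k = (1/A_k) Σ_{i<k} a_{i+1} x(λ^i)`,
the method guarantees `‖A x̂^k - b‖ ≤ 2R/A_k + ε/(2R)` and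
`|φ(η^k) + f(x̂^k)| ≤ 2R²/A_k + ε/2`, where
`A_k ≥ ((1+ν)/(1-ν))^{(1-ν)/(1+ν)} k^{(1+3ν)/(1+ν)} ε^{(1-ν)/(1+ν)} /
  (2^{(1+3ν)/(1+ν)} M_ν^{2/(1+ν)})`. -/
theorem stmt_19 (nn m : ℕ) (ν Mν ε R : ℝ) (hν : ν ∈ Set.Icc (0 : ℝ) 1) (hMν : 0 ≤ Mν)
    (hε : 0 < ε) (hRpos : 0 < R)
    (Q : Set (EuclideanSpace ℝ (Fin nn))) (hQclosed : IsClosed Q) (hQconv : Convex ℝ Q)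
    (f : EuclideanSpace ℝ (Fin nn) → ℝ) (hconv : ConvexOn ℝ Set.univ f)
    (Amap : EuclideanSpace ℝ (Fin nn) →L[ℝ] EuclideanSpace ℝ (Fin m))
    (b : EuclideanSpace ℝ (Fin m))
    (φ : EuclideanSpace ℝ (Fin m) → ℝ)
    (xsel : EuclideanSpace ℝ (Fin m) → EuclideanSpace ℝ (Fin nn))
    (hxsel : ∀ lam, xsel lam ∈ Q)
    (hmax : ∀ lam, ∀ z ∈ Q, -f z - ⟪ContinuousLinearMap.adjoint Amap lam, z⟫ ≤
      -f (xsel lam) - ⟪ContinuousLinearMap.adjoint Amap lam, xsel lam⟫)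
    (hφ : ∀ lam, φ lam = ⟪lam, b⟫ +
      (-f (xsel lam) - ⟪ContinuousLinearMap.adjoint Amap lam, xsel lam⟫))
    (gφ : EuclideanSpace ℝ (Fin m) → EuclideanSpace ℝ (Fin m))
    (hgφ : ∀ lam, gφ lam = b - Amap (xsel lam))
    (hhold : ∀ l1 l2, ‖gφ l1 - gφ l2‖ ≤ Mν * ‖l1 - l2‖ ^ ν)
    (lamstar : EuclideanSpace ℝ (Fin m)) (hstar : ∀ lam, φ lamstar ≤ φ lam)
    (hR : ‖lamstar‖ ≤ R)
    (lam η : ℕ → EuclideanSpace ℝ (Fin m)) (a A : ℕ → ℝ)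
    (hapos : ∀ i, 0 < a (i + 1))
    (hA : ∀ k, A k = ∑ i ∈ Finset.range k, a (i + 1))
    (hrec : ∀ k (z : EuclideanSpace ℝ (Fin m)), A k * φ (η k) ≤
      (∑ i ∈ Finset.range k, a (i + 1) * (φ (lam i) + ⟪gφ (lam i), z - lam i⟫)) +
        (1 / 2) * ‖z‖ ^ 2 + A k * ε / 2)
    (xhat : ℕ → EuclideanSpace ℝ (Fin nn))
    (hxhat : ∀ k, xhat k = (A k)⁻¹ • ∑ i ∈ Finset.range k, a (i + 1) • xsel (lam i))
    (hAlow : ∀ k : ℕ,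
      ((1 + ν) / (1 - ν)) ^ ((1 - ν) / (1 + ν)) *
        (k : ℝ) ^ ((1 + 3 * ν) / (1 + ν)) * ε ^ ((1 - ν) / (1 + ν)) /
        ((2 : ℝ) ^ ((1 + 3 * ν) / (1 + ν)) * Mν ^ (2 / (1 + ν))) ≤ A k) :
    ∀ k : ℕ, 1 ≤ k →
      ‖Amap (xhat k) - b‖ ≤ 2 * R / A k + ε / (2 * R) ∧
      |φ (η k) + f (xhat k)| ≤ 2 * R ^ 2 / A k + ε / 2 :=
  stmt_19_general nn m ε R hRpos Q hQconv f hconv Amap b φ xsel hxsel hmax hφ gφ hgφ lamstar hstar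
    hR lam η a A hapos hA hrec xhat hxhat
end
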